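/- arXiv:0810.4072 — 4 statements merged into one kernel-verified Lean document; each statement's English description precedes it below -/
import Mathlib

section
/- Assume 0 < q ≤ p with p² + q² < 1, let g₀ be a normalized probability density, let T > 0 and N ∈ ℕ with N > T, and set Δt = T/N and r = 2/(1 − p² − q²). Then there exists a unique sequence φ̂₁^N, …, φ̂_N^N of bounded C¹ functions satisfying the semi-implicit scheme, and for j = 0, …, N−1 it is given explicitly by φ̂_{j+1}^N(ξ) = (r/Δt) ∫₁^∞ [Δt · φ̂_j^N(pτξ) φ̂_j^N(qτξ) + (1 − Δt) φ̂_j^N(τξ)] τ^{−r/Δt − 1} dτ for ξ ≠ 0, extended by continuity at ξ = 0. -/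
open MeasureTheory Real

/-- Fourier transform `f̂(ξ) = ∫ e^{-iξv} f(v) dv`. -/
noncomputable def ft (f : ℝ → ℝ) (ξ : ℝ) : ℂ :=
  ∫ v : ℝ, Complex.exp (-Complex.I * (ξ : ℂ) * (v : ℂ)) * (f v : ℂ)

/-- A probability density on `ℝ`. -/
def IsProbDensity (f : ℝ → ℝ) : Prop :=
  (∀ v, 0 ≤ f v) ∧ Integrable f ∧ (∫ v, f v) = 1

/-- A normalized probability density: unit mass, zero mean, unit second moment. -/
def IsNormalized (f : ℝ → ℝ) : Prop :=
  IsProbDensity f ∧ (∫ v, v * f v) = 0 ∧ (∫ v, v ^ 2 * f v) = 1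

/-- `S_{p,q}(δ) = p^{2+δ} + q^{2+δ} − 1 − ((2+δ)/2)(p² + q² − 1)`. -/
noncomputable def Spq (p q δ : ℝ) : ℝ :=
  p ^ (2 + δ) + q ^ (2 + δ) - 1 - ((2 + δ) / 2) * (p ^ 2 + q ^ 2 - 1)

/-- Solution of the Fourier-transformed dissipative Maxwell model. -/
def IsSolution (p q : ℝ) (f₀ : ℝ → ℝ) (f : ℝ → ℝ → ℝ) : Prop :=
  f 0 = f₀ ∧ (∀ t : ℝ, 0 ≤ t → IsProbDensity (f t)) ∧
  (∀ ξ t : ℝ, 0 < t →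
    HasDerivAt (fun s : ℝ => ft (f s) ξ)
      (ft (f t) (p * ξ) * ft (f t) (q * ξ) - ft (f t) ξ) t)

/-- Fourier transform of the scaled solution: `ĝ(ξ,t) = f̂(ξ e^{−(p²+q²−1)t/2}, t)`. -/
noncomputable def scaledFT (p q : ℝ) (f : ℝ → ℝ → ℝ) (ξ t : ℝ) : ℂ :=
  ft (f t) (ξ * Real.exp (-(p ^ 2 + q ^ 2 - 1) * t / 2))

/-- A stationary state: normalized density whose Fourier transform is C¹ away from 0
and satisfies `((1−p²−q²)/2) ξ ĝ′(ξ) + ĝ(pξ)ĝ(qξ) − ĝ(ξ) = 0`. -/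
def IsStationaryState (p q : ℝ) (g : ℝ → ℝ) : Prop :=
  IsNormalized g ∧ ∃ D : ℝ → ℂ,
    ContinuousOn D {ξ : ℝ | ξ ≠ 0} ∧
    (∀ ξ : ℝ, ξ ≠ 0 → HasDerivAt (ft g) (D ξ) ξ) ∧
    (∀ ξ : ℝ, (((1 - p ^ 2 - q ^ 2) / 2 : ℝ) : ℂ) * (ξ : ℂ) * D ξ
      + ft g (p * ξ) * ft g (q * ξ) - ft g ξ = 0)

/-- Fourier-based distance `d_α(u,w) = sup_ξ |u(ξ) − w(ξ)|/|ξ|^α`. -/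
noncomputable def dFour (α : ℝ) (u w : ℝ → ℂ) : ℝ :=
  ⨆ ξ : ℝ, ‖u ξ - w ξ‖ / |ξ| ^ α

/-- Fourier-side semi-implicit scheme with step `Δt = T/N`, `1/r = (1−p²−q²)/2`. -/
def FourierScheme (p q : ℝ) (u₀ : ℝ → ℂ) (T : ℝ) (N : ℕ) (φ : ℕ → ℝ → ℂ) : Prop :=
  φ 0 = u₀ ∧ ∀ j < N,
    ContDiff ℝ 1 (φ (j + 1)) ∧ (∃ M : ℝ, ∀ ξ, ‖φ (j + 1) ξ‖ ≤ M) ∧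
    ∀ ξ : ℝ, (φ (j + 1) ξ - φ j ξ) / ((T / (N : ℝ) : ℝ) : ℂ) =
      (((1 - p ^ 2 - q ^ 2) / 2 : ℝ) : ℂ) * (ξ : ℂ) * deriv (φ (j + 1)) ξ
      + φ j (p * ξ) * φ j (q * ξ) - φ j ξ




section
open Set

namespace Stmt6Aux

noncomputable def G (p q Δ : ℝ) (u : ℝ → ℂ) : ℝ → ℂ := fun x =>
  ((Δ : ℝ) : ℂ) * (u (p * x) * u (q * x)) + ((1 - Δ : ℝ) : ℂ) * u x

noncomputable def step (p q Δ β : ℝ) (u : ℝ → ℂ) : ℝ → ℂ := fun ξ =>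
  ((β : ℝ) : ℂ) * ∫ τ in Set.Ioi (1:ℝ), G p q Δ u (τ * ξ) * ((τ ^ (-β - 1) : ℝ) : ℂ)

noncomputable def Gd (p q Δ : ℝ) (u : ℝ → ℂ) : ℝ → ℂ := fun x =>
  ((Δ : ℝ) : ℂ) * ((p:ℂ) * (deriv u (p * x) * u (q * x)) + (q:ℂ) * (u (p * x) * deriv u (q * x)))
    + ((1 - Δ : ℝ) : ℂ) * deriv u x

variable {p q Δ β C : ℝ} {u : ℝ → ℂ}

lemma hasDerivAt_G (hu : ContDiff ℝ 1 u) (x : ℝ) :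
    HasDerivAt (G p q Δ u) (Gd p q Δ u x) x := by
  have hd : Differentiable ℝ u := hu.differentiable one_ne_zero
  have h1 : HasDerivAt (fun y : ℝ => u (p * y)) (p • deriv u (p * x)) x :=
    (hd (p*x)).hasDerivAt.scomp x (by simpa using (hasDerivAt_id x).const_mul p)
  have h2 : HasDerivAt (fun y : ℝ => u (q * y)) (q • deriv u (q * x)) x :=
    (hd (q*x)).hasDerivAt.scomp x (by simpa using (hasDerivAt_id x).const_mul q)
  have h3 := ((h1.mul h2).const_mul ((Δ : ℝ) : ℂ)).add (((hd x).hasDerivAt).const_mul ((1 - Δ : ℝ) : ℂ))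
  refine h3.congr_deriv (Eq.symm ?_)
  simp only [Gd, Complex.real_smul]
  ring

lemma contDiff_G (hu : ContDiff ℝ 1 u) : ContDiff ℝ 1 (G p q Δ u) := by
  have h1 : ContDiff ℝ 1 fun y : ℝ => u (p * y) := hu.comp (contDiff_const.mul contDiff_id)
  have h2 : ContDiff ℝ 1 fun y : ℝ => u (q * y) := hu.comp (contDiff_const.mul contDiff_id)
  exact (contDiff_const.mul (h1.mul h2)).add (contDiff_const.mul hu)

lemma deriv_G (hu : ContDiff ℝ 1 u) : deriv (G p q Δ u) = Gd p q Δ u :=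
  funext fun x => (hasDerivAt_G hu x).deriv

lemma continuous_Gd (hu : ContDiff ℝ 1 u) : Continuous (Gd p q Δ u) := by
  have := (contDiff_one_iff_deriv.mp hu).2
  have hc : Continuous u := hu.continuous
  exact (continuous_const.mul (((continuous_const.mul
      ((this.comp (continuous_const.mul continuous_id)).mul
        (hc.comp (continuous_const.mul continuous_id)))).add
      (continuous_const.mul ((hc.comp (continuous_const.mul continuous_id)).mul
        (this.comp (continuous_const.mul continuous_id))))))).add
    (continuous_const.mul this)

lemma norm_G_le (hΔ0 : 0 < Δ) (hΔ1 : Δ ≤ 1) (hub : ∀ x, ‖u x‖ ≤ 1) (x : ℝ) :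
    ‖G p q Δ u x‖ ≤ 1 := by
  have h1 := hub (p * x); have h2 := hub (q * x); have h3 := hub x
  have n1 : (0:ℝ) ≤ ‖u (p*x)‖ := norm_nonneg _
  have n2 : (0:ℝ) ≤ ‖u (q*x)‖ := norm_nonneg _
  have n3 : (0:ℝ) ≤ ‖u x‖ := norm_nonneg _
  have key : ‖G p q Δ u x‖ ≤ Δ * (‖u (p*x)‖ * ‖u (q*x)‖) + (1 - Δ) * ‖u x‖ := by
    refine (norm_add_le _ _).trans ?_
    simp only [norm_mul, Complex.norm_real, Real.norm_eq_abs,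
      abs_of_pos hΔ0, abs_of_nonneg (by linarith : (0:ℝ) ≤ 1 - Δ)]
    exact le_refl _
  nlinarith [mul_le_one₀ h1 n2 h2]

lemma norm_Gd_le (hΔ0 : 0 < Δ) (hΔ1 : Δ ≤ 1) (hp0 : 0 ≤ p) (hp1 : p ≤ 1) (hq0 : 0 ≤ q)
    (hq1 : q ≤ 1) (hub : ∀ x, ‖u x‖ ≤ 1) (hC : 0 ≤ C) (hud : ∀ x, ‖deriv u x‖ ≤ C) (x : ℝ) :
    ‖Gd p q Δ u x‖ ≤ 3 * C := by
  have h1 := hub (p * x); have h2 := hub (q * x)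
  have d1 := hud (p * x); have d2 := hud (q * x); have d3 := hud x
  have n1 : (0:ℝ) ≤ ‖u (p*x)‖ := norm_nonneg _
  have n2 : (0:ℝ) ≤ ‖u (q*x)‖ := norm_nonneg _
  have m1 : (0:ℝ) ≤ ‖deriv u (p*x)‖ := norm_nonneg _
  have m2 : (0:ℝ) ≤ ‖deriv u (q*x)‖ := norm_nonneg _
  have m3 : (0:ℝ) ≤ ‖deriv u x‖ := norm_nonneg _
  have key : ‖Gd p q Δ u x‖ ≤
      Δ * (p * (‖deriv u (p*x)‖ * ‖u (q*x)‖) + q * (‖u (p*x)‖ * ‖deriv u (q*x)‖))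
        + (1 - Δ) * ‖deriv u x‖ := by
    refine (norm_add_le _ _).trans ?_
    gcongr
    · rw [norm_mul, Complex.norm_real, Real.norm_eq_abs, abs_of_pos hΔ0]
      gcongr
      refine (norm_add_le _ _).trans ?_
      simp only [norm_mul, Complex.norm_real, Real.norm_eq_abs, Complex.norm_ofNat]
      rw [abs_of_nonneg hp0, abs_of_nonneg hq0]
    · rw [norm_mul, Complex.norm_real, Real.norm_eq_abs, abs_of_nonneg (by linarith : (0:ℝ) ≤ 1 - Δ)]
  have e1 : ‖deriv u (p*x)‖ * ‖u (q*x)‖ ≤ C * 1 := mul_le_mul d1 h2 n2 hC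
  have e2 : ‖u (p*x)‖ * ‖deriv u (q*x)‖ ≤ 1 * C := mul_le_mul h1 d2 m2 zero_le_one
  nlinarith [mul_le_mul hp1 e1 (by positivity) zero_le_one,
    mul_le_mul hq1 e2 (by positivity) zero_le_one]

lemma kint (hβ : 1 < β) : IntegrableOn (fun τ : ℝ => τ ^ (-β - 1)) (Ioi 1) :=
  integrableOn_Ioi_rpow_of_lt (by linarith) one_pos

lemma kint2 (hβ : 1 < β) : IntegrableOn (fun τ : ℝ => τ ^ (-β)) (Ioi 1) :=
  integrableOn_Ioi_rpow_of_lt (by linarith) one_pos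

lemma kval (hβ : 1 < β) : ∫ τ in Ioi (1:ℝ), τ ^ (-β - 1) = 1 / β := by
  rw [integral_Ioi_rpow_of_lt (by linarith) one_pos,
    show -β - 1 + 1 = -β from by ring, Real.one_rpow]
  rw [neg_div_neg_eq]

lemma kval2 (hβ : 1 < β) : ∫ τ in Ioi (1:ℝ), τ ^ (-β) = 1 / (β - 1) := by
  rw [integral_Ioi_rpow_of_lt (by linarith) one_pos, Real.one_rpow,
    show -β + 1 = -(β - 1) from by ring, neg_div_neg_eq]

lemma kmeas (γ : ℝ) : AEStronglyMeasurable (fun τ : ℝ => ((τ ^ γ : ℝ) : ℂ))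
    (volume.restrict (Ioi 1)) := by
  refine Continuous.comp_aestronglyMeasurable Complex.continuous_ofReal ?_
  refine (ContinuousOn.aestronglyMeasurable ?_ measurableSet_Ioi)
  intro x hx
  exact (Real.continuousAt_rpow_const x _ (Or.inl (by simp at hx; positivity))).continuousWithinAt

lemma rpow_split {τ : ℝ} (h0 : 0 < τ) : τ ^ (-β) = τ * τ ^ (-β - 1) := by
  have h := Real.rpow_add h0 1 (-β - 1)
  rw [Real.rpow_one] at h
  rw [← h]
  norm_num

lemma step_spec (hβ : 1 < β) (hΔ0 : 0 < Δ) (hΔ1 : Δ ≤ 1) (hp0 : 0 ≤ p) (hp1 : p ≤ 1)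
    (hq0 : 0 ≤ q) (hq1 : q ≤ 1) (hu : ContDiff ℝ 1 u) (hub : ∀ x, ‖u x‖ ≤ 1)
    {C : ℝ} (hud : ∀ x, ‖deriv u x‖ ≤ C) :
    ContDiff ℝ 1 (step p q Δ β u) ∧ (∀ x, ‖step p q Δ β u x‖ ≤ 1) ∧
      (∃ C', ∀ x, ‖deriv (step p q Δ β u) x‖ ≤ C') ∧
      ∀ ξ : ℝ, step p q Δ β u ξ
        = ((β⁻¹ : ℝ) : ℂ) * (ξ : ℂ) * deriv (step p q Δ β u) ξ + G p q Δ u ξ := by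
  have hC : 0 ≤ C := le_trans (norm_nonneg _) (hud 0)
  have hβ0 : (0:ℝ) < β := by linarith
  set μ := volume.restrict (Ioi (1:ℝ)) with hμ
  set F : ℝ → ℝ → ℂ := fun x τ => G p q Δ u (τ * x) * ((τ ^ (-β - 1) : ℝ) : ℂ) with hF
  set F' : ℝ → ℝ → ℂ := fun x τ => (τ • Gd p q Δ u (τ * x)) * ((τ ^ (-β - 1) : ℝ) : ℂ) with hF'
  have hGc : Continuous (G p q Δ u) := (contDiff_G hu).continuous
  have hGdc : Continuous (Gd p q Δ u) := continuous_Gd hu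
  have hGb : ∀ x, ‖G p q Δ u x‖ ≤ 1 := norm_G_le hΔ0 hΔ1 hub
  have hGdb : ∀ x, ‖Gd p q Δ u x‖ ≤ 3 * C := norm_Gd_le hΔ0 hΔ1 hp0 hp1 hq0 hq1 hub hC hud
  have hFmeas : ∀ x : ℝ, AEStronglyMeasurable (F x) μ := fun x =>
    ((hGc.comp (continuous_id.mul continuous_const)).aestronglyMeasurable).mul (kmeas _)
  have hF'meas : ∀ x : ℝ, AEStronglyMeasurable (F' x) μ := fun x =>
    ((continuous_id.smul (hGdc.comp (continuous_id.mul continuous_const))).aestronglyMeasurable).mul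
      (kmeas _)
  have hτpos : ∀ᵐ τ ∂μ, (1:ℝ) < τ := ae_restrict_mem measurableSet_Ioi
  -- pointwise bounds
  have hFptb : ∀ x : ℝ, ∀ τ : ℝ, 1 < τ → ‖F x τ‖ ≤ τ ^ (-β - 1) := by
    intro x τ hτ
    have h0 : (0:ℝ) < τ := lt_trans one_pos hτ
    have : ‖F x τ‖ = ‖G p q Δ u (τ * x)‖ * (τ ^ (-β - 1)) := by
      rw [hF]; simp only [norm_mul, Complex.norm_real, Real.norm_eq_abs,
        abs_of_nonneg (Real.rpow_nonneg h0.le _)]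
    rw [this]
    have h2 := hGb (τ * x)
    nlinarith [Real.rpow_nonneg h0.le (-β - 1), norm_nonneg (G p q Δ u (τ * x))]
  have hF'ptb : ∀ x : ℝ, ∀ τ : ℝ, 1 < τ → ‖F' x τ‖ ≤ 3 * C * τ ^ (-β) := by
    intro x τ hτ
    have h0 : (0:ℝ) < τ := lt_trans one_pos hτ
    have : ‖F' x τ‖ = τ * ‖Gd p q Δ u (τ * x)‖ * (τ ^ (-β - 1)) := by
      rw [hF']; simp only [norm_mul, norm_smul, Complex.norm_real, Real.norm_eq_abs,
        abs_of_nonneg (Real.rpow_nonneg h0.le _), abs_of_pos h0, mul_assoc]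
    rw [this, rpow_split (β := β) h0]
    have h2 := hGdb (τ * x)
    have hk : (0:ℝ) ≤ τ ^ (-β - 1) := Real.rpow_nonneg h0.le _
    nlinarith [mul_le_mul_of_nonneg_left h2 (mul_nonneg h0.le hk)]
  have hFint : ∀ x, Integrable (F x) μ := fun x =>
    (kint hβ).mono' (hFmeas x) (by filter_upwards [hτpos] with τ hτ using hFptb x τ hτ)
  have hbint : Integrable (fun τ : ℝ => 3 * C * τ ^ (-β)) μ := (kint2 hβ).const_mul _
  have hF'int : ∀ x, Integrable (F' x) μ := fun x =>
    hbint.mono' (hF'meas x) (by filter_upwards [hτpos] with τ hτ using hF'ptb x τ hτ)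
  -- differentiation under the integral
  have hFderiv : ∀ (τ x : ℝ), HasDerivAt (fun y => F y τ) (F' x τ) x := by
    intro τ x
    exact ((hasDerivAt_G hu (τ * x)).scomp x
      (by simpa using (hasDerivAt_id x).const_mul τ)).mul_const _
  have hDint : ∀ x₀ : ℝ, HasDerivAt (fun x => ∫ τ, F x τ ∂μ) (∫ τ, F' x₀ τ ∂μ) x₀ := by
    intro x₀
    refine (hasDerivAt_integral_of_dominated_loc_of_deriv_le (Metric.ball_mem_nhds x₀ zero_lt_one)
      (Filter.Eventually.of_forall hFmeas) (hFint x₀) (hF'meas x₀) ?_ hbint ?_).2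
    · filter_upwards [hτpos] with τ hτ
      intro x _
      exact hF'ptb x τ hτ
    · filter_upwards [hτpos] with τ hτ
      intro x _
      exact hFderiv τ x
  have hstep : step p q Δ β u = fun x => ((β : ℝ) : ℂ) * ∫ τ, F x τ ∂μ := rfl
  have hDstep : ∀ x, HasDerivAt (step p q Δ β u) (((β : ℝ) : ℂ) * ∫ τ, F' x τ ∂μ) x := by
    intro x
    rw [hstep]
    exact (hDint x).const_mul _
  have hderiv_eq : deriv (step p q Δ β u) = fun x => ((β : ℝ) : ℂ) * ∫ τ, F' x τ ∂μ :=
    funext fun x => (hDstep x).deriv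
  have hcontD : Continuous fun x : ℝ => ∫ τ, F' x τ ∂μ := by
    rw [continuous_iff_continuousAt]
    intro x₀
    refine continuousAt_of_dominated (Filter.Eventually.of_forall hF'meas) ?_ hbint ?_
    · exact Filter.Eventually.of_forall fun x => by
        filter_upwards [hτpos] with τ hτ using hF'ptb x τ hτ
    · filter_upwards [hτpos] with τ hτ
      exact ((by fun_prop : Continuous fun x : ℝ => (τ • Gd p q Δ u (τ * x)) * ((τ ^ (-β - 1) : ℝ) : ℂ))).continuousAt
  refine ⟨?_, ?_, ?_, ?_⟩
  · exact contDiff_one_iff_deriv.mpr ⟨fun x => (hDstep x).differentiableAt,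
      by rw [hderiv_eq]; exact continuous_const.mul hcontD⟩
  · intro x
    rw [hstep]
    have h1 : ‖∫ τ, F x τ ∂μ‖ ≤ ∫ τ, τ ^ (-β - 1) ∂μ :=
      norm_integral_le_of_norm_le (kint hβ)
        (by filter_upwards [hτpos] with τ hτ using hFptb x τ hτ)
    have h2 : (∫ τ, τ ^ (-β - 1) ∂μ) = 1 / β := kval hβ
    rw [norm_mul, Complex.norm_real, Real.norm_eq_abs, abs_of_pos hβ0]
    calc β * ‖∫ τ, F x τ ∂μ‖ ≤ β * (1 / β) := by rw [h2] at h1; exact by gcongr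
      _ = 1 := by field_simp
  · refine ⟨β * (3 * C * (1 / (β - 1))), fun x => ?_⟩
    rw [hderiv_eq]
    have h1 : ‖∫ τ, F' x τ ∂μ‖ ≤ ∫ τ, 3 * C * τ ^ (-β) ∂μ :=
      norm_integral_le_of_norm_le hbint
        (by filter_upwards [hτpos] with τ hτ using hF'ptb x τ hτ)
    have h2 : (∫ τ, 3 * C * τ ^ (-β) ∂μ) = 3 * C * (1 / (β - 1)) := by
      rw [integral_const_mul, kval2 hβ]
    rw [norm_mul, Complex.norm_real, Real.norm_eq_abs, abs_of_pos hβ0]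
    rw [h2] at h1
    gcongr
  · intro ξ
    set g : ℝ → ℂ := fun τ => -(G p q Δ u (τ * ξ)) * ((τ ^ (-β) : ℝ) : ℂ) with hg
    set g' : ℝ → ℂ := fun τ => ((β : ℝ) : ℂ) * F ξ τ - (ξ : ℂ) * F' ξ τ with hg'
    have hgd : ∀ τ ∈ Ici (1:ℝ), HasDerivAt g (g' τ) τ := by
      intro τ hτ
      have h0 : (0:ℝ) < τ := lt_of_lt_of_le one_pos hτ
      have h1 : HasDerivAt (fun τ : ℝ => -(G p q Δ u (τ * ξ))) (-(ξ • Gd p q Δ u (τ * ξ))) τ :=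
        ((hasDerivAt_G hu (τ * ξ)).scomp τ
          (by simpa using (hasDerivAt_id τ).mul_const ξ)).neg
      have h2 : HasDerivAt (fun τ : ℝ => ((τ ^ (-β) : ℝ) : ℂ)) (((-β * τ ^ (-β - 1) : ℝ)) : ℂ) τ :=
        (Real.hasDerivAt_rpow_const (Or.inl h0.ne')).ofReal_comp
      have h3 := h1.mul h2
      refine h3.congr_deriv (Eq.symm ?_)
      rw [hg', hF, hF']
      simp only [Complex.real_smul, Complex.ofReal_mul, Complex.ofReal_neg]
      rw [rpow_split (β := β) h0]
      push_cast
      ring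
    have htend : Filter.Tendsto g Filter.atTop (nhds 0) := by
      refine squeeze_zero_norm' ?_ (tendsto_rpow_neg_atTop hβ0)
      filter_upwards [Filter.eventually_gt_atTop (0:ℝ)] with τ hτ
      have heq : ‖g τ‖ = ‖G p q Δ u (τ * ξ)‖ * (τ ^ (-β)) := by
        rw [hg]; simp only [norm_mul, norm_neg, Complex.norm_real, Real.norm_eq_abs,
          abs_of_nonneg (Real.rpow_nonneg hτ.le _)]
      rw [heq]
      nlinarith [Real.rpow_nonneg hτ.le (-β), hGb (τ * ξ), norm_nonneg (G p q Δ u (τ * ξ))]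
    have hg'int : Integrable g' μ := ((hFint ξ).const_mul _).sub ((hF'int ξ).const_mul _)
    have hFTC : (∫ τ in Ioi (1:ℝ), g' τ) = 0 - g 1 :=
      integral_Ioi_of_hasDerivAt_of_tendsto' hgd hg'int htend
    have hg1 : g 1 = -(G p q Δ u ξ) := by
      rw [hg]; simp [Real.one_rpow]
    have hsplit : (∫ τ in Ioi (1:ℝ), g' τ)
        = ((β : ℝ) : ℂ) * (∫ τ, F ξ τ ∂μ) - (ξ : ℂ) * (∫ τ, F' ξ τ ∂μ) := by
      rw [hg']
      rw [integral_sub ((hFint ξ).const_mul _) ((hF'int ξ).const_mul _),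
        integral_const_mul, integral_const_mul]
    have hkey : ((β : ℝ) : ℂ) * (∫ τ, F ξ τ ∂μ) - (ξ : ℂ) * (∫ τ, F' ξ τ ∂μ) = G p q Δ u ξ := by
      rw [← hsplit, hFTC, hg1]; ring
    have hbne : ((β : ℝ) : ℂ) ≠ 0 := Complex.ofReal_ne_zero.mpr hβ0.ne'
    have hb : ((β⁻¹ : ℝ) : ℂ) * ((β : ℝ) : ℂ) = 1 := by
      push_cast
      field_simp
    rw [hderiv_eq, hstep]
    beta_reduce
    linear_combination hkey - ((ξ : ℂ) * ∫ τ, F' ξ τ ∂μ) * hb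

lemma ft_base {g₀ : ℝ → ℝ} (hg : IsNormalized g₀) :
    ContDiff ℝ 1 (ft g₀) ∧ (∀ x, ‖ft g₀ x‖ ≤ 1) ∧ (∀ x, ‖deriv (ft g₀) x‖ ≤ 1) := by
  obtain ⟨⟨hpos, hint, hmass⟩, hmean, hvar⟩ := hg
  have hmeas := hint.aestronglyMeasurable
  have h2 : Integrable (fun v => v ^ 2 * g₀ v) := by
    by_contra h
    rw [integral_undef h] at hvar
    exact zero_ne_one hvar
  have habs : Integrable (fun v => |v| * g₀ v) := by
    refine (hint.add h2).mono' ((continuous_abs.aestronglyMeasurable).mul hmeas) ?_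
    refine Filter.Eventually.of_forall fun v => ?_
    rw [Real.norm_eq_abs, abs_of_nonneg (mul_nonneg (abs_nonneg v) (hpos v))]
    simp only [Pi.add_apply]
    have h1 : |v| ≤ 1 + v ^ 2 := by nlinarith [sq_nonneg (|v| - 1), sq_abs v]
    nlinarith [hpos v, mul_le_mul_of_nonneg_right h1 (hpos v)]
  have habs1 : (∫ v, |v| * g₀ v) ≤ 1 := by
    have hptw : ∀ v, |v| * g₀ v ≤ (1/2 : ℝ) * g₀ v + (1/2 : ℝ) * (v ^ 2 * g₀ v) := by
      intro v
      have h1 : |v| ≤ (1 + v ^ 2) / 2 := by nlinarith [sq_nonneg (|v| - 1), sq_abs v]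
      nlinarith [hpos v, mul_le_mul_of_nonneg_right h1 (hpos v)]
    calc (∫ v, |v| * g₀ v) ≤ ∫ v, ((1/2 : ℝ) * g₀ v + (1/2 : ℝ) * (v ^ 2 * g₀ v)) :=
          integral_mono habs ((hint.const_mul _).add (h2.const_mul _)) hptw
      _ = 1 := by
          rw [integral_add (hint.const_mul _) (h2.const_mul _), integral_const_mul,
            integral_const_mul, hmass, hvar]
          norm_num
  set F : ℝ → ℝ → ℂ := fun x v => Complex.exp ((-Complex.I * v) * x) * ((g₀ v : ℝ) : ℂ) with hF
  set F' : ℝ → ℝ → ℂ :=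
    fun x v => ((-Complex.I * v) * Complex.exp ((-Complex.I * v) * x)) * ((g₀ v : ℝ) : ℂ) with hF'
  have hft : ft g₀ = fun x => ∫ v, F x v := by
    funext x
    unfold ft
    refine integral_congr_ae (Filter.Eventually.of_forall fun v => ?_)
    rw [hF]
    simp only
    rw [show -Complex.I * (x : ℂ) * (v : ℂ) = -Complex.I * (v : ℂ) * (x : ℂ) from by ring]
  have hexp : ∀ (x v : ℝ), ‖Complex.exp ((-Complex.I * v) * x)‖ = 1 := by
    intro x v
    rw [Complex.norm_exp]
    have : ((-Complex.I * v) * x).re = 0 := by simp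
    rw [this, Real.exp_zero]
  have hnF : ∀ (x v : ℝ), ‖F x v‖ = g₀ v := by
    intro x v
    rw [hF]
    simp only [norm_mul, hexp, one_mul, Complex.norm_real, Real.norm_eq_abs,
      abs_of_nonneg (hpos v)]
  have hnF' : ∀ (x v : ℝ), ‖F' x v‖ = |v| * g₀ v := by
    intro x v
    rw [hF']
    simp only [norm_mul, hexp, mul_one, norm_neg, Complex.norm_I, one_mul,
      Complex.norm_real, Real.norm_eq_abs, abs_of_nonneg (hpos v)]
  have hFmeas : ∀ x : ℝ, AEStronglyMeasurable (F x) volume := fun x =>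
    ((Complex.continuous_exp.comp
      ((continuous_const.mul Complex.continuous_ofReal).mul continuous_const)).aestronglyMeasurable).mul
      (Complex.continuous_ofReal.comp_aestronglyMeasurable hmeas)
  have hF'meas : ∀ x : ℝ, AEStronglyMeasurable (F' x) volume := fun x =>
    (((continuous_const.mul Complex.continuous_ofReal).mul (Complex.continuous_exp.comp
      ((continuous_const.mul Complex.continuous_ofReal).mul continuous_const))).aestronglyMeasurable).mul
      (Complex.continuous_ofReal.comp_aestronglyMeasurable hmeas)
  have hFint : ∀ x : ℝ, Integrable (F x) volume := fun x =>
    hint.mono' (hFmeas x) (Filter.Eventually.of_forall fun v => le_of_eq (hnF x v))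
  have hF'int : ∀ x : ℝ, Integrable (F' x) volume := fun x =>
    habs.mono' (hF'meas x) (Filter.Eventually.of_forall fun v => le_of_eq (hnF' x v))
  have hFderiv : ∀ (v x : ℝ), HasDerivAt (fun y => F y v) (F' x v) x := by
    intro v x
    have he : HasDerivAt (fun z : ℂ => Complex.exp ((-Complex.I * v) * z))
        ((-Complex.I * v) * Complex.exp ((-Complex.I * v) * x)) (x : ℂ) := by
      have h1 : HasDerivAt (fun z : ℂ => (-Complex.I * v) * z) (-Complex.I * v) (x : ℂ) := by
        simpa using (hasDerivAt_id (x : ℂ)).const_mul (-Complex.I * (v : ℂ))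
      have := (Complex.hasDerivAt_exp ((-Complex.I * v) * (x : ℂ))).comp (x : ℂ) h1
      refine this.congr_deriv ?_
      ring
    exact (he.comp_ofReal).mul_const _
  have hDint : ∀ x₀ : ℝ, HasDerivAt (fun x => ∫ v, F x v) (∫ v, F' x₀ v) x₀ := by
    intro x₀
    refine (hasDerivAt_integral_of_dominated_loc_of_deriv_le (Metric.ball_mem_nhds x₀ zero_lt_one)
      (Filter.Eventually.of_forall hFmeas) (hFint x₀) (hF'meas x₀) ?_ habs ?_).2
    · exact Filter.Eventually.of_forall fun v => fun x _ => le_of_eq (hnF' x v)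
    · exact Filter.Eventually.of_forall fun v => fun x _ => hFderiv v x
  have hderiv_eq : deriv (ft g₀) = fun x => ∫ v, F' x v := by
    rw [hft]
    exact funext fun x => (hDint x).deriv
  have hcontD : Continuous fun x : ℝ => ∫ v, F' x v := by
    rw [continuous_iff_continuousAt]
    intro x₀
    refine continuousAt_of_dominated (Filter.Eventually.of_forall hF'meas) ?_ habs ?_
    · exact Filter.Eventually.of_forall fun x =>
        Filter.Eventually.of_forall fun v => le_of_eq (hnF' x v)
    · refine Filter.Eventually.of_forall fun v => ?_
      exact (((continuous_const.mul (Complex.continuous_exp.comp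
        (continuous_const.mul Complex.continuous_ofReal))).mul continuous_const)).continuousAt
  refine ⟨?_, ?_, ?_⟩
  · refine contDiff_one_iff_deriv.mpr ⟨?_, ?_⟩
    · rw [hft]
      exact fun x => (hDint x).differentiableAt
    · rw [hderiv_eq]
      exact hcontD
  · intro x
    rw [hft]
    calc ‖∫ v, F x v‖ ≤ ∫ v, g₀ v :=
          norm_integral_le_of_norm_le hint (Filter.Eventually.of_forall fun v => le_of_eq (hnF x v))
      _ = 1 := hmass
  · intro x
    rw [hderiv_eq]
    calc ‖∫ v, F' x v‖ ≤ ∫ v, |v| * g₀ v :=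
          norm_integral_le_of_norm_le habs
            (Filter.Eventually.of_forall fun v => le_of_eq (hnF' x v))
      _ ≤ 1 := habs1

lemma uniq_zero_pos (hβ0 : 0 < β) {w : ℝ → ℂ} (hw : ContDiff ℝ 1 w) {M : ℝ}
    (hM : ∀ x, ‖w x‖ ≤ M)
    (hode : ∀ x : ℝ, (x : ℂ) * deriv w x = ((β : ℝ) : ℂ) * w x) :
    ∀ x : ℝ, 0 < x → w x = 0 := by
  intro ξ hξ
  have hdiff : Differentiable ℝ w := hw.differentiable one_ne_zero
  set h : ℝ → ℂ := fun x => ((x ^ (-β) : ℝ) : ℂ) * w x with hh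
  have hhd : ∀ x : ℝ, 0 < x → HasDerivAt h 0 x := by
    intro x hx
    have h1 : HasDerivAt (fun y : ℝ => ((y ^ (-β) : ℝ) : ℂ)) (((-β * x ^ (-β - 1) : ℝ)) : ℂ) x :=
      (Real.hasDerivAt_rpow_const (Or.inl hx.ne')).ofReal_comp
    have h2 := h1.mul (hdiff x).hasDerivAt
    rw [hh]
    refine h2.congr_deriv (Eq.symm ?_)
    rw [rpow_split (β := β) hx, Complex.ofReal_mul, Complex.ofReal_mul, Complex.ofReal_neg]
    linear_combination (-(((x ^ (-β - 1) : ℝ) : ℂ))) * hode x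
  have hconst : ∀ A : ℝ, ξ ≤ A → ‖h ξ‖ ≤ M * A ^ (-β) := by
    intro A hA
    have hcc : ∀ x ∈ Icc ξ A, h x = h ξ := by
      apply constant_of_has_deriv_right_zero
      · intro x hx
        exact ((hhd x (lt_of_lt_of_le hξ hx.1)).continuousAt).continuousWithinAt
      · intro x hx
        exact (hhd x (lt_of_lt_of_le hξ hx.1)).hasDerivWithinAt
    have hAe : h A = h ξ := hcc A ⟨hA, le_refl A⟩
    have hA0 : (0:ℝ) < A := lt_of_lt_of_le hξ hA
    rw [← hAe, hh]
    simp only [norm_mul, Complex.norm_real, Real.norm_eq_abs,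
      abs_of_nonneg (Real.rpow_nonneg hA0.le (-β))]
    rw [mul_comm]
    exact mul_le_mul_of_nonneg_right (hM A) (Real.rpow_nonneg hA0.le _)
  have hlim : Filter.Tendsto (fun A : ℝ => M * A ^ (-β)) Filter.atTop (nhds 0) := by
    simpa using (tendsto_rpow_neg_atTop hβ0).const_mul M
  have hle : ‖h ξ‖ ≤ 0 := by
    refine ge_of_tendsto hlim ?_
    filter_upwards [Filter.eventually_ge_atTop ξ] with A hA using hconst A hA
  have hzero : h ξ = 0 := norm_le_zero_iff.mp hle
  rw [hh] at hzero
  simp only at hzero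
  rcases mul_eq_zero.mp hzero with hc | hc
  · exfalso
    have : (ξ:ℝ) ^ (-β) ≠ 0 := (Real.rpow_pos_of_pos hξ _).ne'
    exact this (by exact_mod_cast hc)
  · exact hc

lemma uniq_zero (hβ0 : 0 < β) {w : ℝ → ℂ} (hw : ContDiff ℝ 1 w) {M : ℝ}
    (hM : ∀ x, ‖w x‖ ≤ M)
    (hode : ∀ x : ℝ, (x : ℂ) * deriv w x = ((β : ℝ) : ℂ) * w x)
    (h0 : w 0 = 0) : ∀ x : ℝ, w x = 0 := by
  intro x
  rcases lt_trichotomy x 0 with hx | hx | hx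
  · set w2 : ℝ → ℂ := fun y => w (-y) with hw2
    have hw2c : ContDiff ℝ 1 w2 := hw.comp (contDiff_id.neg)
    have hode2 : ∀ y : ℝ, (y : ℂ) * deriv w2 y = ((β : ℝ) : ℂ) * w2 y := by
      intro y
      have hd : deriv w2 y = -deriv w (-y) := deriv_comp_neg w y
      rw [hw2]
      simp only
      rw [hd]
      have := hode (-y)
      push_cast at this ⊢
      linear_combination this
    have := uniq_zero_pos hβ0 hw2c (fun y => hM (-y)) hode2 (-x) (by linarith)
    rw [hw2] at this
    simpa using this
  · rw [hx]; exact h0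
  · exact uniq_zero_pos hβ0 hw hM hode x hx

end Stmt6Aux

theorem stmt6 (p q : ℝ) (hq : 0 < q) (hqp : q ≤ p) (hdiss : p ^ 2 + q ^ 2 < 1)
    (g₀ : ℝ → ℝ) (hg₀ : IsNormalized g₀)
    (T : ℝ) (hT : 0 < T) (N : ℕ) (hN : T < (N : ℝ)) :
    ∃ φ : ℕ → ℝ → ℂ, FourierScheme p q (ft g₀) T N φ ∧
      (∀ ψ : ℕ → ℝ → ℂ, FourierScheme p q (ft g₀) T N ψ → ∀ j ≤ N, ψ j = φ j) ∧
      (∀ j < N, ∀ ξ : ℝ, ξ ≠ 0 →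
        φ (j + 1) ξ =
          (((2 / (1 - p ^ 2 - q ^ 2)) / (T / (N : ℝ)) : ℝ) : ℂ) *
            ∫ τ in Set.Ioi (1 : ℝ),
              (((T / (N : ℝ) : ℝ) : ℂ) * (φ j (p * τ * ξ) * φ j (q * τ * ξ))
                  + ((1 - T / (N : ℝ) : ℝ) : ℂ) * φ j (τ * ξ)) *
                ((τ ^ (-((2 / (1 - p ^ 2 - q ^ 2)) / (T / (N : ℝ))) - 1) : ℝ) : ℂ)) := by
  classical
  obtain ⟨hft1, hft2, hft3⟩ := Stmt6Aux.ft_base hg₀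
  set Δ : ℝ := T / (N : ℝ) with hΔdef
  set r : ℝ := 2 / (1 - p ^ 2 - q ^ 2) with hrdef
  set β : ℝ := r / Δ with hβdef
  have hd0 : 0 < 1 - p ^ 2 - q ^ 2 := by linarith
  have hp0 : 0 ≤ p := le_trans hq.le hqp
  have hp1 : p ≤ 1 := by nlinarith
  have hq1 : q ≤ 1 := by nlinarith
  have hN0 : (0:ℝ) < (N : ℝ) := lt_trans hT hN
  have hΔ0 : 0 < Δ := div_pos hT hN0
  have hΔ1 : Δ < 1 := (div_lt_one hN0).mpr hN
  have hr2 : 2 ≤ r := by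
    rw [hrdef, le_div_iff₀ hd0]; nlinarith
  have hβ : 1 < β := by
    rw [hβdef]
    exact (one_lt_div hΔ0).mpr (by linarith)
  have hβ0 : (0:ℝ) < β := by linarith
  have hΔne : ((Δ : ℝ) : ℂ) ≠ 0 := Complex.ofReal_ne_zero.mpr hΔ0.ne'
  have hβne : ((β : ℝ) : ℂ) ≠ 0 := Complex.ofReal_ne_zero.mpr hβ0.ne'
  -- key real identities
  have hkey2 : ((1 - p ^ 2 - q ^ 2) / 2) * Δ = β⁻¹ := by
    rw [hβdef, hrdef]
    field_simp
  have hkey2C : (((1 - p ^ 2 - q ^ 2) / 2 : ℝ) : ℂ) * ((Δ : ℝ) : ℂ) = ((β⁻¹ : ℝ) : ℂ) := by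
    rw [← Complex.ofReal_mul]
    exact congrArg _ hkey2
  have hkey3C : (((1 - p ^ 2 - q ^ 2) / 2 : ℝ) : ℂ) * ((Δ : ℝ) : ℂ) * ((β : ℝ) : ℂ) = 1 := by
    rw [hkey2C, ← Complex.ofReal_mul, inv_mul_cancel₀ hβ0.ne']
    exact Complex.ofReal_one
  -- the iteration
  set φ : ℕ → ℝ → ℂ := fun j => (Stmt6Aux.step p q Δ β)^[j] (ft g₀) with hφdef
  have hφ0 : φ 0 = ft g₀ := rfl
  have hφs : ∀ j, φ (j + 1) = Stmt6Aux.step p q Δ β (φ j) := by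
    intro j
    simp only [hφdef, Function.iterate_succ_apply']
  have hinv : ∀ j, ContDiff ℝ 1 (φ j) ∧ (∀ x, ‖φ j x‖ ≤ 1) ∧ ∃ C, ∀ x, ‖deriv (φ j) x‖ ≤ C := by
    intro j
    induction j with
    | zero => exact ⟨hft1, hft2, 1, hft3⟩
    | succ n ih =>
      obtain ⟨h1, h2, C, h3⟩ := ih
      obtain ⟨g1, g2, g3, _⟩ := Stmt6Aux.step_spec hβ hΔ0 hΔ1.le hp0 hp1 hq.le hq1 h1 h2 h3
      exact ⟨by rw [hφs n]; exact g1, by rw [hφs n]; exact g2, by rw [hφs n]; exact g3⟩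
  have hode : ∀ j, ∀ ξ : ℝ, φ (j + 1) ξ
      = ((β⁻¹ : ℝ) : ℂ) * (ξ : ℂ) * deriv (φ (j + 1)) ξ + Stmt6Aux.G p q Δ (φ j) ξ := by
    intro j ξ
    obtain ⟨h1, h2, C, h3⟩ := hinv j
    rw [hφs j]
    exact (Stmt6Aux.step_spec hβ hΔ0 hΔ1.le hp0 hp1 hq.le hq1 h1 h2 h3).2.2.2 ξ
  -- the scheme equation for φ
  have hφeq : ∀ j, ∀ ξ : ℝ, (φ (j + 1) ξ - φ j ξ) / ((Δ : ℝ) : ℂ)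
      = (((1 - p ^ 2 - q ^ 2) / 2 : ℝ) : ℂ) * (ξ : ℂ) * deriv (φ (j + 1)) ξ
        + φ j (p * ξ) * φ j (q * ξ) - φ j ξ := by
    intro j ξ
    rw [div_eq_iff hΔne, hode j ξ]
    simp only [Stmt6Aux.G, Complex.ofReal_sub, Complex.ofReal_one]
    linear_combination (-((ξ : ℂ) * deriv (φ (j + 1)) ξ)) * hkey2C
  have hφscheme : FourierScheme p q (ft g₀) T N φ := by
    refine ⟨hφ0, fun j _ => ⟨(hinv (j + 1)).1, ⟨1, fun ξ => ?_⟩, fun ξ => hφeq j ξ⟩⟩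
    exact (hinv (j + 1)).2.1 ξ
  refine ⟨φ, hφscheme, ?_, ?_⟩
  · -- uniqueness
    intro ψ hψ j
    induction j with
    | zero =>
      intro _
      rw [hψ.1, hφ0]
    | succ n ih =>
      intro hn
      have hn' : n < N := Nat.lt_of_succ_le hn
      have hψn : ψ n = φ n := ih (Nat.le_of_lt hn')
      obtain ⟨hψC, ⟨Mψ, hψM⟩, hψeq⟩ := hψ.2 n hn'
      have hφC : ContDiff ℝ 1 (φ (n + 1)) := (hinv (n + 1)).1
      have hφM : ∀ x, ‖φ (n + 1) x‖ ≤ 1 := (hinv (n + 1)).2.1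
      rw [hψn] at hψeq
      set w : ℝ → ℂ := fun x => ψ (n + 1) x - φ (n + 1) x with hw
      have hwC : ContDiff ℝ 1 w := hψC.sub hφC
      have hwM : ∀ x, ‖w x‖ ≤ Mψ + 1 := by
        intro x
        rw [hw]
        refine (norm_sub_le _ _).trans ?_
        have := hψM x
        exact add_le_add this (hφM x)
      have hdw : ∀ ξ : ℝ, deriv w ξ = deriv (ψ (n + 1)) ξ - deriv (φ (n + 1)) ξ := by
        intro ξ
        rw [hw]
        exact deriv_sub (hψC.differentiable one_ne_zero ξ) (hφC.differentiable one_ne_zero ξ)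
      have hodew : ∀ ξ : ℝ, (ξ : ℂ) * deriv w ξ = ((β : ℝ) : ℂ) * w ξ := by
        intro ξ
        have e1 := hψeq ξ
        have e2 := hφeq n ξ
        rw [div_eq_iff hΔne] at e1 e2
        rw [hdw ξ, hw]
        simp only
        linear_combination (-(((β : ℝ) : ℂ))) * (e1 - e2)
          - ((ξ : ℂ) * (deriv (ψ (n + 1)) ξ - deriv (φ (n + 1)) ξ)) * hkey3C
      have hw0 : w 0 = 0 := by
        have := hodew 0
        rw [Complex.ofReal_zero, zero_mul] at this
        exact (mul_eq_zero.mp this.symm).resolve_left hβne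
      have := Stmt6Aux.uniq_zero hβ0 hwC hwM hodew hw0
      funext x
      have hx := this x
      rw [hw] at hx
      simpa [sub_eq_zero] using hx
  · -- explicit formula
    intro j _ ξ _
    rw [hφs j]
    show ((β : ℝ) : ℂ) * _ = _
    congr 1
    refine integral_congr_ae (Filter.Eventually.of_forall fun τ => ?_)
    simp only [Stmt6Aux.G]
    rw [mul_assoc p τ ξ, mul_assoc q τ ξ]

end
end

section
/- Let g₀ be a normalized probability density on ℝ and suppose that s := √g₀ is square integrable with ∫_ℝ |ξ|^{2ν} |ŝ(ξ)|² dξ < ∞ for some ν > 0. Then |ξ|^ν |ĝ₀(ξ)| is bounded on ℝ; consequently there exist constants C > 0 and β > 0 such that |ĝ₀(ξ)| ≤ C (1 + β|ξ|)^{−ν} for all ξ ∈ ℝ. -/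
open MeasureTheory Real

open Filter Metric Set Topology
open scoped ENNReal NNReal

local notation "cexp" => Complex.exp
local notation "cI" => Complex.I

lemma phase_norm (a b : ℝ) : ‖Complex.exp (-Complex.I * (a:ℂ) * (b:ℂ))‖ = 1 := by
  rw [Complex.norm_exp]
  simp [Complex.mul_re]

lemma ft_norm_le {f : ℝ → ℝ} (hf : ∀ v, 0 ≤ f v) (ξ : ℝ) :
    ‖ft f ξ‖ ≤ ∫ v, f v := by
  rw [ft]
  refine (norm_integral_le_integral_norm _).trans (le_of_eq ?_)
  refine integral_congr_ae (Eventually.of_forall fun v => ?_)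
  simp only [norm_mul, phase_norm, one_mul, Complex.norm_real, Real.norm_of_nonneg (hf v)]

lemma ft_cont {f : ℝ → ℝ} (hfi : Integrable f) : Continuous (ft f) := by
  refine continuous_of_dominated (bound := fun v => |f v|) (fun ξ => ?_) (fun ξ => ?_)
    hfi.abs (Eventually.of_forall fun v => ?_)
  · exact ((Complex.continuous_exp.comp (by fun_prop)).aestronglyMeasurable).mul
      (Complex.continuous_ofReal.comp_aestronglyMeasurable hfi.aestronglyMeasurable)
  · exact Eventually.of_forall fun v => by
      rw [norm_mul, phase_norm, one_mul, Complex.norm_real]; rfl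
  · exact (Complex.continuous_exp.comp (by fun_prop)).mul continuous_const

lemma weight_ineq {ν : ℝ} (hν : 0 ≤ ν) (a b : ℝ) :
    |a + b| ^ ν ≤ 2 ^ ν * (|a| ^ ν + |b| ^ ν) := by
  have h1 : |a + b| ≤ 2 * max |a| |b| := by
    refine (abs_add_le a b).trans ?_
    rcases le_total |a| |b| with h | h
    · rw [max_eq_right h]; linarith
    · rw [max_eq_left h]; linarith
  calc |a + b| ^ ν ≤ (2 * max |a| |b|) ^ ν :=
        Real.rpow_le_rpow (abs_nonneg _) h1 hν
    _ = 2 ^ ν * (max |a| |b|) ^ ν :=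
        Real.mul_rpow (by norm_num) (le_max_iff.2 (Or.inl (abs_nonneg a)))
    _ ≤ 2 ^ ν * (|a| ^ ν + |b| ^ ν) := by
        refine mul_le_mul_of_nonneg_left ?_ (Real.rpow_nonneg (by norm_num) ν)
        rcases le_total |a| |b| with h | h
        · rw [max_eq_right h]
          nlinarith [Real.rpow_nonneg (abs_nonneg a) ν]
        · rw [max_eq_left h]
          nlinarith [Real.rpow_nonneg (abs_nonneg b) ν]

lemma cs_integrable {f g : ℝ → ℝ} (hf0 : ∀ x, 0 ≤ f x) (hg0 : ∀ x, 0 ≤ g x)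
    (hfm : AEStronglyMeasurable f (volume : Measure ℝ))
    (hgm : AEStronglyMeasurable g (volume : Measure ℝ))
    (hf2 : Integrable (fun x => f x ^ 2)) (hg2 : Integrable (fun x => g x ^ 2)) :
    Integrable (fun x => f x * g x) := by
  refine Integrable.mono' ((hf2.add hg2).const_mul (1/2)) (hfm.mul hgm)
    (Eventually.of_forall fun x => ?_)
  simp only [Pi.add_apply]
  rw [Real.norm_eq_abs, abs_of_nonneg (mul_nonneg (hf0 x) (hg0 x))]
  nlinarith [sq_nonneg (f x - g x)]

lemma cs_le {f g : ℝ → ℝ} (hf0 : ∀ x, 0 ≤ f x) (hg0 : ∀ x, 0 ≤ g x)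
    (hfm : AEStronglyMeasurable f (volume : Measure ℝ))
    (hgm : AEStronglyMeasurable g (volume : Measure ℝ))
    (hf2 : Integrable (fun x => f x ^ 2)) (hg2 : Integrable (fun x => g x ^ 2)) :
    ∫ x, f x * g x ≤ Real.sqrt (∫ x, f x ^ 2) * Real.sqrt (∫ x, g x ^ 2) := by
  have hpq : Real.HolderConjugate 2 2 := ⟨by norm_num, by norm_num, by norm_num⟩
  have hf : MemLp f (ENNReal.ofReal 2) volume := by
    rw [show ENNReal.ofReal 2 = 2 by norm_num]
    exact (memLp_two_iff_integrable_sq hfm).2 hf2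
  have hg : MemLp g (ENNReal.ofReal 2) volume := by
    rw [show ENNReal.ofReal 2 = 2 by norm_num]
    exact (memLp_two_iff_integrable_sq hgm).2 hg2
  have := integral_mul_le_Lp_mul_Lq_of_nonneg hpq (Eventually.of_forall hf0)
    (Eventually.of_forall hg0) hf hg
  calc ∫ x, f x * g x ≤ (∫ x, f x ^ (2:ℝ)) ^ ((1:ℝ)/2) * (∫ x, g x ^ (2:ℝ)) ^ ((1:ℝ)/2) := this
    _ = Real.sqrt (∫ x, f x ^ 2) * Real.sqrt (∫ x, g x ^ 2) := by
        rw [← Real.sqrt_eq_rpow, ← Real.sqrt_eq_rpow]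
        norm_num [Real.rpow_two]

lemma ennreal_quarters (a : ℝ≥0∞) : a/4 + (a/2 + a/4) = a := by
  have h2 : a/4 + a/4 = a/2 := by
    rw [ENNReal.div_add_div_same, ← two_mul, show (4:ℝ≥0∞) = 2*2 by norm_num,
      ENNReal.mul_div_mul_left _ _ two_ne_zero (by norm_num)]
  calc a/4 + (a/2 + a/4) = (a/4 + a/4) + a/2 := by
        rw [add_comm (a/2) (a/4), ← add_assoc]
    _ = a/2 + a/2 := by rw [h2]
    _ = a := ENNReal.add_halves a

lemma tendsto_translate {s : ℝ → ℝ} (hs : MemLp s 2 (volume : Measure ℝ)) :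
    Tendsto (fun y : ℝ => eLpNorm (fun u => s (u - y) - s u) 2 volume) (𝓝 0) (𝓝 0) := by
  rw [ENNReal.tendsto_nhds_zero]
  intro ε hε
  set ε' : ℝ≥0∞ := min (ε/4) 1 with hε'def
  have hε'pos : 0 < ε' := lt_min (ENNReal.div_pos hε.ne' (by norm_num)) (by norm_num)
  obtain ⟨φ, φsupp, φclose, φcont, φmem⟩ :=
    hs.exists_hasCompactSupport_eLpNorm_sub_le (p := 2) (by norm_num) hε'pos.ne'
  set K : Set ℝ := Metric.cthickening 1 (tsupport φ) with hKdef
  have hKc : IsCompact K := φsupp.cthickening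
  have hKm : MeasurableSet K := isClosed_cthickening.measurableSet
  have hKvol : volume K ≠ ⊤ := hKc.measure_lt_top.ne
  set V : ℝ≥0∞ := volume K ^ ((1:ℝ)/2) with hVdef
  have hV : V ≠ ⊤ := ENNReal.rpow_ne_top_of_nonneg (by norm_num) hKvol
  set δ₀ : ℝ := (min (ε/2) 1).toReal / (V.toReal + 1) with hδdef
  have hVt : 0 ≤ V.toReal := ENNReal.toReal_nonneg
  have hmin_ne_top : (min (ε/2) 1 : ℝ≥0∞) ≠ ⊤ := by
    simp only [ne_eq, min_eq_top, not_and]; intro h; norm_num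
  have hmin_pos : 0 < min (ε/2) 1 := lt_min (ENNReal.div_pos hε.ne' (by norm_num)) (by norm_num)
  have hδ₀pos : 0 < δ₀ :=
    div_pos (ENNReal.toReal_pos hmin_pos.ne' hmin_ne_top) (by linarith)
  have hδ₀V : ENNReal.ofReal δ₀ * V ≤ ε / 2 := by
    have hVle : V ≤ ENNReal.ofReal (V.toReal + 1) := by
      conv_lhs => rw [← ENNReal.ofReal_toReal hV]
      exact ENNReal.ofReal_le_ofReal (by linarith)
    calc ENNReal.ofReal δ₀ * V ≤ ENNReal.ofReal δ₀ * ENNReal.ofReal (V.toReal + 1) :=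
          mul_le_mul_right hVle _
      _ = ENNReal.ofReal (δ₀ * (V.toReal + 1)) := (ENNReal.ofReal_mul hδ₀pos.le).symm
      _ = min (ε/2) 1 := by
          rw [hδdef, div_mul_cancel₀ _ (by linarith : V.toReal + 1 ≠ 0),
            ENNReal.ofReal_toReal hmin_ne_top]
      _ ≤ ε/2 := min_le_left _ _
  have hφu : UniformContinuous φ :=
    φcont.uniformContinuous_of_tendsto_cocompact φsupp.is_zero_at_infty
  obtain ⟨η, hη, hηδ⟩ := Metric.uniformContinuous_iff.1 hφu δ₀ hδ₀pos
  filter_upwards [Metric.ball_mem_nhds (0:ℝ) (lt_min hη one_pos)] with y hy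
  rw [Metric.mem_ball, Real.dist_eq, sub_zero] at hy
  have hy1 : |y| ≤ 1 := le_of_lt (lt_of_lt_of_le hy (min_le_right _ _))
  have hyη : |y| < η := lt_of_lt_of_le hy (min_le_left _ _)
  have hsm := hs.aestronglyMeasurable
  have hsty : AEStronglyMeasurable (fun u : ℝ => s (u - y)) volume :=
    hsm.comp_quasiMeasurePreserving
      (measurePreserving_sub_right volume y).quasiMeasurePreserving
  have hφty : Continuous (fun u : ℝ => φ (u - y)) := φcont.comp (by fun_prop)
  have hA : AEStronglyMeasurable (fun u : ℝ => s (u - y) - φ (u - y)) volume :=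
    hsty.sub hφty.aestronglyMeasurable
  have hB : AEStronglyMeasurable (fun u : ℝ => φ (u - y) - φ u) volume :=
    (hφty.sub φcont).aestronglyMeasurable
  have hC : AEStronglyMeasurable (fun u : ℝ => φ u - s u) volume :=
    φcont.aestronglyMeasurable.sub hsm
  have hdec : (fun u => s (u - y) - s u) =
      fun u => (s (u - y) - φ (u - y)) + ((φ (u - y) - φ u) + (φ u - s u)) := by
    funext u; ring
  have ht1 : eLpNorm (fun u : ℝ => s (u - y) - φ (u - y)) 2 volume
      = eLpNorm (s - φ) 2 volume := by
    have := eLpNorm_comp_measurePreserving (p := 2) (g := s - φ)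
      (hsm.sub φcont.aestronglyMeasurable) (measurePreserving_sub_right volume y)
    exact this
  have ht3 : eLpNorm (fun u : ℝ => φ u - s u) 2 volume = eLpNorm (s - φ) 2 volume := by
    have : (fun u : ℝ => φ u - s u) = φ - s := rfl
    rw [this, eLpNorm_sub_comm]
  have ht2 : eLpNorm (fun u : ℝ => φ (u - y) - φ u) 2 volume ≤ ε / 2 := by
    have hpt : ∀ u, ‖φ (u - y) - φ u‖ ≤ ‖K.indicator (fun _ => δ₀) u‖ := by
      intro u
      by_cases hu : u ∈ K
      · rw [Set.indicator_of_mem hu, Real.norm_eq_abs, Real.norm_eq_abs,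
          abs_of_pos hδ₀pos]
        have hd : dist (u - y) u < η := by
          rw [Real.dist_eq]; simpa using hyη
        have := hηδ hd
        rw [Real.dist_eq] at this
        exact this.le
      · have h1 : φ u = 0 := by
          apply image_eq_zero_of_notMem_tsupport
          exact fun hmem => hu (self_subset_cthickening _ hmem)
        have h2 : φ (u - y) = 0 := by
          apply image_eq_zero_of_notMem_tsupport
          intro hmem
          apply hu
          exact Metric.mem_cthickening_of_dist_le u (u - y) 1 _ hmem
            (by rw [Real.dist_eq]; simpa using hy1)
        simp [h1, h2, Set.indicator]
    calc eLpNorm (fun u : ℝ => φ (u - y) - φ u) 2 volume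
        ≤ eLpNorm (K.indicator (fun _ => δ₀)) 2 volume := eLpNorm_mono hpt
      _ = ‖δ₀‖₊ * volume K ^ ((1:ℝ)/2) := by
          rw [eLpNorm_indicator_const hKm (by norm_num) (by norm_num)]
          norm_num
          rfl
      _ ≤ ENNReal.ofReal δ₀ * V := by
          rw [hVdef]
          gcongr
          rw [← Real.enorm_eq_ofReal hδ₀pos.le]; exact le_rfl
      _ ≤ ε / 2 := hδ₀V
  rw [hdec]
  calc eLpNorm (fun u : ℝ => (s (u - y) - φ (u - y)) + ((φ (u - y) - φ u) + (φ u - s u)))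
        2 volume
      ≤ eLpNorm (fun u : ℝ => s (u - y) - φ (u - y)) 2 volume
        + eLpNorm (fun u : ℝ => (φ (u - y) - φ u) + (φ u - s u)) 2 volume :=
        eLpNorm_add_le hA (hB.add hC) one_le_two
    _ ≤ eLpNorm (fun u : ℝ => s (u - y) - φ (u - y)) 2 volume
        + (eLpNorm (fun u : ℝ => φ (u - y) - φ u) 2 volume
          + eLpNorm (fun u : ℝ => φ u - s u) 2 volume) :=
        add_le_add le_rfl (eLpNorm_add_le hB hC one_le_two)
    _ ≤ ε/4 + (ε/2 + ε/4) := by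
        rw [ht1, ht3]
        have hε4 : eLpNorm (s - φ) 2 volume ≤ ε/4 := φclose.trans (min_le_left _ _)
        gcongr
    _ = ε := ennreal_quarters ε

lemma gauss_fourier {b : ℝ} (hb : 0 < b) (t : ℝ) :
    ∫ τ : ℝ, ((Real.exp (-b * τ^2) : ℝ) : ℂ) * cexp (-cI * (t:ℂ) * (τ:ℂ))
      = ((Real.sqrt (π / b) : ℝ) : ℂ) * ((Real.exp (-t^2 / (4*b)) : ℝ) : ℂ) := by
  have hb' : 0 < ((b:ℂ)).re := by simpa using hb
  calc ∫ τ : ℝ, ((Real.exp (-b * τ^2) : ℝ) : ℂ) * cexp (-cI * (t:ℂ) * (τ:ℂ))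
      = ∫ x : ℝ, cexp (cI * (((-t : ℝ)):ℂ) * (x:ℂ)) * cexp (-(b:ℂ) * (x:ℂ)^2) := by
        congr 1; funext x
        rw [Complex.ofReal_exp, mul_comm]
        congr 1
        · congr 1; push_cast; ring
        · congr 1; push_cast; ring
    _ = ((π:ℂ) / (b:ℂ)) ^ ((1:ℂ)/2) * cexp (-(((-t:ℝ):ℂ))^2 / (4 * (b:ℂ))) :=
        fourierIntegral_gaussian hb' _
    _ = ((Real.sqrt (π / b) : ℝ) : ℂ) * ((Real.exp (-t^2 / (4*b)) : ℝ) : ℂ) := by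
        rw [Real.sqrt_eq_rpow, Complex.ofReal_cpow (by positivity), Complex.ofReal_exp]
        congr 1
        · push_cast; norm_num
        · congr 1; push_cast; ring

lemma key_identity {s : ℝ → ℝ} (hs0 : ∀ x, 0 ≤ s x) (hsi : Integrable s) (ξ : ℝ)
    {b : ℝ} (hb : 0 < b) :
    ∫ τ : ℝ, ((rexp (-b * τ^2) : ℝ) : ℂ) * (ft s (ξ/2 + τ) * ft s (ξ/2 - τ))
      = ∫ y : ℝ, ((Real.sqrt (π/b) * rexp (-y^2/(4*b)) : ℝ) : ℂ)
          * ∫ u : ℝ, cexp (-cI * (ξ:ℂ) * ((u - y/2 : ℝ):ℂ)) * ((s u * s (u - y) : ℝ) : ℂ) := by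
  have hsm : AEStronglyMeasurable s volume := hsi.aestronglyMeasurable
  have hsmC : AEStronglyMeasurable (fun v : ℝ => ((s v : ℝ) : ℂ)) volume :=
    Complex.continuous_ofReal.comp_aestronglyMeasurable hsm
  have hSc : Continuous (ft s) := ft_cont hsi
  have hK : ∀ a : ℝ, ‖ft s a‖ ≤ ∫ v, s v := fun a => by
    exact ft_norm_le hs0 a
  have hK0 : 0 ≤ ∫ v, s v := integral_nonneg hs0
  have hc0 : (0:ℝ) ≤ Real.sqrt (π/b) := Real.sqrt_nonneg _
  have h1 : Integrable (Function.uncurry fun τ u : ℝ =>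
      (cexp (-cI * ((ξ/2 + τ : ℝ):ℂ) * (u:ℂ)) * ((s u : ℝ):ℂ))
        * (((rexp (-b * τ^2) : ℝ):ℂ) * ft s (ξ/2 - τ))) (volume.prod volume) := by
    have hdom : Integrable (fun p : ℝ × ℝ => (rexp (-b * p.1^2) * (∫ v, s v)) * s p.2)
        (volume.prod volume) :=
      ((integrable_exp_neg_mul_sq hb).mul_const _).mul_prod hsi
    have c1 : Continuous (fun p : ℝ × ℝ => cexp (-cI * ((ξ/2 + p.1 : ℝ):ℂ) * ((p.2 : ℝ):ℂ))) := by
      fun_prop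
    have c2 : Continuous (fun p : ℝ × ℝ => ((rexp (-b * p.1^2) : ℝ):ℂ) * ft s (ξ/2 - p.1)) :=
      (Complex.continuous_ofReal.comp
        (by fun_prop : Continuous fun p : ℝ × ℝ => rexp (-b * p.1^2))).mul
        (hSc.comp (by fun_prop : Continuous fun p : ℝ × ℝ => ξ/2 - p.1))
    refine hdom.mono' ((c1.aestronglyMeasurable.mul hsmC.comp_snd).mul c2.aestronglyMeasurable)
      (Filter.Eventually.of_forall fun p => ?_)
    simp only [Function.uncurry]
    rw [norm_mul, norm_mul, norm_mul, phase_norm, one_mul, Complex.norm_real,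
      Real.norm_of_nonneg (hs0 _), Complex.norm_real,
      Real.norm_of_nonneg (Real.exp_pos _).le]
    have h := hK (ξ/2 - p.1)
    have hsp := hs0 p.2
    have hg := (Real.exp_pos (-b * p.1^2)).le
    calc s p.2 * (rexp (-b * p.1 ^ 2) * ‖ft s (ξ / 2 - p.1)‖)
        ≤ s p.2 * (rexp (-b * p.1 ^ 2) * ∫ v, s v) := by gcongr
      _ = (rexp (-b * p.1 ^ 2) * ∫ v, s v) * s p.2 := by ring
  have h2 : ∀ u : ℝ, Integrable (Function.uncurry fun τ w : ℝ =>
      (cexp (-cI * ((ξ/2 + τ : ℝ):ℂ) * (u:ℂ)) * ((s u : ℝ):ℂ) * ((rexp (-b * τ^2) : ℝ):ℂ))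
        * (cexp (-cI * ((ξ/2 - τ : ℝ):ℂ) * (w:ℂ)) * ((s w : ℝ):ℂ))) (volume.prod volume) := by
    intro u
    have hdom : Integrable (fun p : ℝ × ℝ => (s u * rexp (-b * p.1^2)) * s p.2)
        (volume.prod volume) :=
      ((integrable_exp_neg_mul_sq hb).const_mul _).mul_prod hsi
    have c1 : Continuous (fun p : ℝ × ℝ =>
        cexp (-cI * ((ξ/2 + p.1 : ℝ):ℂ) * ((u : ℝ):ℂ)) * ((s u : ℝ):ℂ)
          * ((rexp (-b * p.1^2) : ℝ):ℂ)) := by fun_prop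
    have c2 : Continuous (fun p : ℝ × ℝ => cexp (-cI * ((ξ/2 - p.1 : ℝ):ℂ) * ((p.2 : ℝ):ℂ))) := by
      fun_prop
    refine hdom.mono' (c1.aestronglyMeasurable.mul (c2.aestronglyMeasurable.mul hsmC.comp_snd))
      (Filter.Eventually.of_forall fun p => ?_)
    simp only [Function.uncurry]
    rw [norm_mul, norm_mul, norm_mul, norm_mul, phase_norm, phase_norm, one_mul, one_mul,
      Complex.norm_real, Real.norm_of_nonneg (hs0 _), Complex.norm_real,
      Real.norm_of_nonneg (Real.exp_pos _).le, Complex.norm_real,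
      Real.norm_of_nonneg (hs0 _)]
  have h3 : Integrable (Function.uncurry fun u y : ℝ =>
      cexp (-cI * (ξ:ℂ) * (((u + (u - y))/2 : ℝ):ℂ)) * ((s u * s (u - y) : ℝ):ℂ)
        * ((Real.sqrt (π/b) * rexp (-(u - (u - y))^2/(4*b)) : ℝ):ℂ)) (volume.prod volume) := by
    have hmeas : AEStronglyMeasurable (Function.uncurry fun u y : ℝ =>
        cexp (-cI * (ξ:ℂ) * (((u + (u - y))/2 : ℝ):ℂ)) * ((s u * s (u - y) : ℝ):ℂ)
          * ((Real.sqrt (π/b) * rexp (-(u - (u - y))^2/(4*b)) : ℝ):ℂ)) (volume.prod volume) := by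
      have c1 : Continuous (fun p : ℝ × ℝ =>
          cexp (-cI * (ξ:ℂ) * (((p.1 + (p.1 - p.2))/2 : ℝ):ℂ))) := by fun_prop
      have c2 : Continuous (fun p : ℝ × ℝ =>
          ((Real.sqrt (π/b) * rexp (-(p.1 - (p.1 - p.2))^2/(4*b)) : ℝ):ℂ)) := by fun_prop
      have m1 : AEStronglyMeasurable (fun p : ℝ × ℝ => ((s p.1 * s (p.1 - p.2) : ℝ):ℂ))
          (volume.prod volume) := by
        refine Complex.continuous_ofReal.comp_aestronglyMeasurable ?_
        exact hsm.comp_fst.mul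
          (hsm.comp_quasiMeasurePreserving (quasiMeasurePreserving_sub (volume : Measure ℝ) volume))
      exact (c1.aestronglyMeasurable.mul m1).mul c2.aestronglyMeasurable
    rw [integrable_prod_iff hmeas]
    have hnorm : ∀ u y : ℝ,
        ‖cexp (-cI * (ξ:ℂ) * (((u + (u - y))/2 : ℝ):ℂ)) * ((s u * s (u - y) : ℝ):ℂ)
          * ((Real.sqrt (π/b) * rexp (-(u - (u - y))^2/(4*b)) : ℝ):ℂ)‖
        = (s u * s (u - y)) * (Real.sqrt (π/b) * rexp (-(u - (u - y))^2/(4*b))) := by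
      intro u y
      rw [norm_mul, norm_mul, phase_norm, one_mul, Complex.norm_real,
        Real.norm_of_nonneg (mul_nonneg (hs0 u) (hs0 _)), Complex.norm_real,
        Real.norm_of_nonneg (by positivity)]
    have hintu : ∀ u : ℝ, Integrable (fun y : ℝ =>
        cexp (-cI * (ξ:ℂ) * (((u + (u - y))/2 : ℝ):ℂ)) * ((s u * s (u - y) : ℝ):ℂ)
          * ((Real.sqrt (π/b) * rexp (-(u - (u - y))^2/(4*b)) : ℝ):ℂ)) := by
      intro u
      have hbase : Integrable (fun y : ℝ => ((s u * s (u - y) : ℝ):ℂ)) :=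
        ((hsi.comp_sub_left u).const_mul (s u)).ofReal
      have hcf : Continuous (fun y : ℝ =>
          cexp (-cI * (ξ:ℂ) * (((u + (u - y))/2 : ℝ):ℂ))
            * ((Real.sqrt (π/b) * rexp (-(u - (u - y))^2/(4*b)) : ℝ):ℂ)) := by fun_prop
      have hmul : Integrable (fun y : ℝ =>
          (cexp (-cI * (ξ:ℂ) * (((u + (u - y))/2 : ℝ):ℂ))
            * ((Real.sqrt (π/b) * rexp (-(u - (u - y))^2/(4*b)) : ℝ):ℂ))
          * ((s u * s (u - y) : ℝ):ℂ)) := by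
        refine hbase.bdd_mul hcf.aestronglyMeasurable (c := Real.sqrt (π/b)) (Eventually.of_forall fun y => ?_)
        rw [norm_mul, phase_norm, one_mul, Complex.norm_real,
          Real.norm_of_nonneg (by positivity)]
        have h1 : rexp (-(u - (u - y))^2/(4*b)) ≤ 1 := by
          rw [Real.exp_le_one_iff, neg_div]
          exact neg_nonpos.2 (by positivity)
        calc Real.sqrt (π/b) * rexp (-(u - (u - y))^2/(4*b))
            ≤ Real.sqrt (π/b) * 1 := by gcongr
          _ = Real.sqrt (π/b) := mul_one _
      refine hmul.congr (Filter.Eventually.of_forall fun y => ?_)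
      ring
    refine ⟨Filter.Eventually.of_forall hintu, ?_⟩
    refine Integrable.mono' ((hsi.mul_const ((Real.sqrt (π/b)) * ∫ v, s v)))
      (hmeas.norm.integral_prod_right') (Filter.Eventually.of_forall fun u => ?_)
    have hb1 : Integrable (fun y : ℝ => (s u * Real.sqrt (π/b)) * s (u - y)) :=
      (hsi.comp_sub_left u).const_mul _
    have hle : (∫ y, ‖Function.uncurry (fun u y : ℝ =>
        cexp (-cI * (ξ:ℂ) * (((u + (u - y))/2 : ℝ):ℂ)) * ((s u * s (u - y) : ℝ):ℂ)
          * ((Real.sqrt (π/b) * rexp (-(u - (u - y))^2/(4*b)) : ℝ):ℂ)) (u, y)‖)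
        ≤ ∫ y, (s u * Real.sqrt (π/b)) * s (u - y) := by
      refine integral_mono_of_nonneg (Filter.Eventually.of_forall fun y => norm_nonneg _)
        hb1 (Filter.Eventually.of_forall fun y => ?_)
      simp only [Function.uncurry]
      rw [hnorm u y]
      have h1 : rexp (-(u - (u - y))^2/(4*b)) ≤ 1 := by
        rw [Real.exp_le_one_iff, neg_div]
        exact neg_nonpos.2 (by positivity)
      have hsu := hs0 u; have hsy := hs0 (u - y)
      calc s u * s (u - y) * (Real.sqrt (π/b) * rexp (-(u - (u - y))^2/(4*b)))
          ≤ s u * s (u - y) * (Real.sqrt (π/b) * 1) := by gcongr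
        _ = s u * Real.sqrt (π/b) * s (u - y) := by ring
    rw [Real.norm_of_nonneg (integral_nonneg fun y => norm_nonneg _)]
    refine hle.trans (le_of_eq ?_)
    rw [integral_const_mul, integral_sub_left_eq_self (fun t => s t) volume u]
    ring
  calc ∫ τ : ℝ, ((rexp (-b * τ^2) : ℝ) : ℂ) * (ft s (ξ/2 + τ) * ft s (ξ/2 - τ))
      = ∫ τ : ℝ, ∫ u : ℝ, (cexp (-cI * ((ξ/2 + τ : ℝ):ℂ) * (u:ℂ)) * ((s u : ℝ):ℂ))
          * (((rexp (-b * τ^2) : ℝ):ℂ) * ft s (ξ/2 - τ)) := by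
        congr 1; funext τ
        rw [integral_mul_const,
          show (∫ u : ℝ, cexp (-cI * ((ξ/2 + τ : ℝ):ℂ) * (u:ℂ)) * ((s u : ℝ):ℂ))
            = ft s (ξ/2 + τ) from rfl]
        ring
    _ = ∫ u : ℝ, ∫ τ : ℝ, (cexp (-cI * ((ξ/2 + τ : ℝ):ℂ) * (u:ℂ)) * ((s u : ℝ):ℂ))
          * (((rexp (-b * τ^2) : ℝ):ℂ) * ft s (ξ/2 - τ)) := integral_integral_swap h1
    _ = ∫ u : ℝ, ∫ τ : ℝ, ∫ w : ℝ,
          (cexp (-cI * ((ξ/2 + τ : ℝ):ℂ) * (u:ℂ)) * ((s u : ℝ):ℂ) * ((rexp (-b * τ^2) : ℝ):ℂ))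
            * (cexp (-cI * ((ξ/2 - τ : ℝ):ℂ) * (w:ℂ)) * ((s w : ℝ):ℂ)) := by
        congr 1; funext u; congr 1; funext τ
        rw [integral_const_mul,
          show (∫ w : ℝ, cexp (-cI * ((ξ/2 - τ : ℝ):ℂ) * (w:ℂ)) * ((s w : ℝ):ℂ))
            = ft s (ξ/2 - τ) from rfl]
        ring
    _ = ∫ u : ℝ, ∫ w : ℝ, ∫ τ : ℝ,
          (cexp (-cI * ((ξ/2 + τ : ℝ):ℂ) * (u:ℂ)) * ((s u : ℝ):ℂ) * ((rexp (-b * τ^2) : ℝ):ℂ))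
            * (cexp (-cI * ((ξ/2 - τ : ℝ):ℂ) * (w:ℂ)) * ((s w : ℝ):ℂ)) := by
        congr 1; funext u
        exact integral_integral_swap (h2 u)
    _ = ∫ u : ℝ, ∫ w : ℝ,
          cexp (-cI * (ξ:ℂ) * (((u + w)/2 : ℝ):ℂ)) * ((s u * s w : ℝ):ℂ)
            * ((Real.sqrt (π/b) * rexp (-(u - w)^2/(4*b)) : ℝ):ℂ) := by
        congr 1; funext u; congr 1; funext w
        have hpt : ∀ τ : ℝ,
            (cexp (-cI * ((ξ/2 + τ : ℝ):ℂ) * (u:ℂ)) * ((s u : ℝ):ℂ) * ((rexp (-b * τ^2) : ℝ):ℂ))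
              * (cexp (-cI * ((ξ/2 - τ : ℝ):ℂ) * (w:ℂ)) * ((s w : ℝ):ℂ))
            = (cexp (-cI * (ξ:ℂ) * (((u + w)/2 : ℝ):ℂ)) * ((s u * s w : ℝ):ℂ))
              * (((rexp (-b * τ^2) : ℝ):ℂ) * cexp (-cI * ((u - w : ℝ):ℂ) * (τ:ℂ))) := by
          intro τ
          calc (cexp (-cI * ((ξ/2 + τ : ℝ):ℂ) * (u:ℂ)) * ((s u : ℝ):ℂ) * ((rexp (-b * τ^2) : ℝ):ℂ))
              * (cexp (-cI * ((ξ/2 - τ : ℝ):ℂ) * (w:ℂ)) * ((s w : ℝ):ℂ))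
              = (cexp (-cI * ((ξ/2 + τ : ℝ):ℂ) * (u:ℂ)) * cexp (-cI * ((ξ/2 - τ : ℝ):ℂ) * (w:ℂ)))
                * (((s u : ℝ):ℂ) * ((s w : ℝ):ℂ) * ((rexp (-b * τ^2) : ℝ):ℂ)) := by ring
            _ = cexp ((-cI * ((ξ/2 + τ : ℝ):ℂ) * (u:ℂ)) + (-cI * ((ξ/2 - τ : ℝ):ℂ) * (w:ℂ)))
                * (((s u : ℝ):ℂ) * ((s w : ℝ):ℂ) * ((rexp (-b * τ^2) : ℝ):ℂ)) := by
                rw [← Complex.exp_add]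
            _ = cexp ((-cI * (ξ:ℂ) * (((u + w)/2 : ℝ):ℂ)) + (-cI * ((u - w : ℝ):ℂ) * (τ:ℂ)))
                * (((s u : ℝ):ℂ) * ((s w : ℝ):ℂ) * ((rexp (-b * τ^2) : ℝ):ℂ)) := by
                congr 1; push_cast; ring
            _ = (cexp (-cI * (ξ:ℂ) * (((u + w)/2 : ℝ):ℂ)) * ((s u * s w : ℝ):ℂ))
                * (((rexp (-b * τ^2) : ℝ):ℂ) * cexp (-cI * ((u - w : ℝ):ℂ) * (τ:ℂ))) := by
                rw [Complex.exp_add]; push_cast; ring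
        rw [integral_congr_ae (Eventually.of_forall hpt), integral_const_mul,
          gauss_fourier hb (u - w)]
        push_cast; ring
    _ = ∫ u : ℝ, ∫ y : ℝ,
          cexp (-cI * (ξ:ℂ) * (((u + (u - y))/2 : ℝ):ℂ)) * ((s u * s (u - y) : ℝ):ℂ)
            * ((Real.sqrt (π/b) * rexp (-(u - (u - y))^2/(4*b)) : ℝ):ℂ) := by
        congr 1; funext u
        exact (integral_sub_left_eq_self (fun w : ℝ =>
          cexp (-cI * (ξ:ℂ) * (((u + w)/2 : ℝ):ℂ)) * ((s u * s w : ℝ):ℂ)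
            * ((Real.sqrt (π/b) * rexp (-(u - w)^2/(4*b)) : ℝ):ℂ)) volume u).symm
    _ = ∫ y : ℝ, ∫ u : ℝ,
          cexp (-cI * (ξ:ℂ) * (((u + (u - y))/2 : ℝ):ℂ)) * ((s u * s (u - y) : ℝ):ℂ)
            * ((Real.sqrt (π/b) * rexp (-(u - (u - y))^2/(4*b)) : ℝ):ℂ) :=
        integral_integral_swap h3
    _ = ∫ y : ℝ, ((Real.sqrt (π/b) * rexp (-y^2/(4*b)) : ℝ) : ℂ)
          * ∫ u : ℝ, cexp (-cI * (ξ:ℂ) * ((u - y/2 : ℝ):ℂ)) * ((s u * s (u - y) : ℝ) : ℂ) := by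
        congr 1; funext y
        rw [← integral_const_mul]
        congr 1; funext u
        rw [show (u + (u - y))/2 = u - y/2 from by ring, show u - (u - y) = y from by ring]
        ring

lemma sqrt_integral_sq_eq {f : ℝ → ℝ} (hf : MemLp f 2 (volume : Measure ℝ)) :
    Real.sqrt (∫ x, f x ^ 2) = (eLpNorm f 2 volume).toReal := by
  rw [hf.eLpNorm_eq_integral_rpow_norm two_ne_zero ENNReal.ofNat_ne_top,
    ENNReal.toReal_ofReal (Real.rpow_nonneg (integral_nonneg fun x => by positivity) _)]
  rw [show ((2:ℝ≥0∞).toReal) = (2:ℝ) from by norm_num]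
  rw [Real.sqrt_eq_rpow]
  have h1 : (∫ a, ‖f a‖ ^ (2:ℝ)) = ∫ x, f x ^ 2 := by
    refine integral_congr_ae (Eventually.of_forall fun x => ?_)
    show ‖f x‖ ^ (2:ℝ) = f x ^ 2
    rw [show ((2:ℝ)) = ((2:ℕ):ℝ) from by norm_num, Real.rpow_natCast, Real.norm_eq_abs, sq_abs]
  rw [h1]
  norm_num

lemma memℒp_translate {s : ℝ → ℝ} (hs : MemLp s 2 (volume : Measure ℝ)) (y : ℝ) :
    MemLp (fun u : ℝ => s (u - y)) 2 (volume : Measure ℝ) := by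
  refine ⟨hs.aestronglyMeasurable.comp_quasiMeasurePreserving
    (measurePreserving_sub_right volume y).quasiMeasurePreserving, ?_⟩
  rw [show (fun u : ℝ => s (u - y)) = s ∘ (fun u : ℝ => u - y) from rfl,
    eLpNorm_comp_measurePreserving hs.aestronglyMeasurable
      (measurePreserving_sub_right volume y)]
  exact hs.2

lemma key_bound {s : ℝ → ℝ} (hs0 : ∀ x, 0 ≤ s x) (hsi : Integrable s)
    (hs2 : MemLp s 2 (volume : Measure ℝ))
    (hS2 : Integrable (fun τ : ℝ => ‖ft s τ‖ ^ 2)) (ξ : ℝ) :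
    ‖ft (fun x => s x * s x) ξ‖ ≤
      (1 / (2 * π)) * ∫ τ, ‖ft s (ξ/2 + τ)‖ * ‖ft s (ξ/2 - τ)‖ := by
  have hsm : AEStronglyMeasurable s volume := hsi.aestronglyMeasurable
  have hSc : Continuous (ft s) := ft_cont hsi
  -- the function G
  set G : ℝ → ℂ := fun y =>
    ∫ u : ℝ, cexp (-cI * (ξ:ℂ) * ((u - y/2 : ℝ):ℂ)) * ((s u * s (u - y) : ℝ) : ℂ) with hGdef
  have hG0 : G 0 = ft (fun x => s x * s x) ξ := by
    rw [hGdef]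
    show (∫ u : ℝ, cexp (-cI * (ξ:ℂ) * ((u - 0/2 : ℝ):ℂ)) * ((s u * s (u - 0) : ℝ) : ℂ)) = _
    rw [ft]
    congr 1; funext u; norm_num
  -- product integrability of translates
  have hprod_int : ∀ y : ℝ, Integrable (fun u : ℝ => s u * s (u - y)) := by
    intro y
    refine cs_integrable hs0 (fun u => hs0 _) hsm
      (hsm.comp_quasiMeasurePreserving
        (measurePreserving_sub_right volume y).quasiMeasurePreserving)
      hs2.integrable_sq ?_
    exact (hs2.integrable_sq).comp_sub_right y
  -- Integrability of G
  have hΘmeas : AEStronglyMeasurable (fun p : ℝ × ℝ =>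
      cexp (-cI * (ξ:ℂ) * ((p.2 - p.1/2 : ℝ):ℂ)) * ((s p.2 * s (p.2 - p.1) : ℝ):ℂ))
      (volume.prod volume) := by
    have c1 : Continuous (fun p : ℝ × ℝ => cexp (-cI * (ξ:ℂ) * ((p.2 - p.1/2 : ℝ):ℂ))) := by
      fun_prop
    have m1 : AEStronglyMeasurable (fun p : ℝ × ℝ => ((s p.2 * s (p.2 - p.1) : ℝ):ℂ))
        (volume.prod volume) := by
      refine Complex.continuous_ofReal.comp_aestronglyMeasurable ?_
      refine hsm.comp_snd.mul (hsm.comp_quasiMeasurePreserving ?_)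
      exact (quasiMeasurePreserving_sub (volume : Measure ℝ) volume).comp
        (Measure.measurePreserving_swap (μ := (volume : Measure ℝ)) (ν := volume)).quasiMeasurePreserving
    exact c1.aestronglyMeasurable.mul m1
  have hΘnorm : ∀ y u : ℝ,
      ‖cexp (-cI * (ξ:ℂ) * ((u - y/2 : ℝ):ℂ)) * ((s u * s (u - y) : ℝ):ℂ)‖
        = s u * s (u - y) := by
    intro y u
    rw [norm_mul, phase_norm, one_mul, Complex.norm_real,
      Real.norm_of_nonneg (mul_nonneg (hs0 u) (hs0 _))]
  have hΘint_y : ∀ y : ℝ, Integrable (fun u : ℝ =>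
      cexp (-cI * (ξ:ℂ) * ((u - y/2 : ℝ):ℂ)) * ((s u * s (u - y) : ℝ):ℂ)) := by
    intro y
    refine ((hprod_int y).ofReal.bdd_mul
      (Continuous.aestronglyMeasurable (by fun_prop)) (c := 1) (Eventually.of_forall fun u => ?_))
    rw [phase_norm]
  have hΘ : Integrable (fun p : ℝ × ℝ =>
      cexp (-cI * (ξ:ℂ) * ((p.2 - p.1/2 : ℝ):ℂ)) * ((s p.2 * s (p.2 - p.1) : ℝ):ℂ))
      (volume.prod volume) := by
    rw [integrable_prod_iff' hΘmeas]
    constructor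
    · exact Eventually.of_forall fun u => by
        have hbase : Integrable (fun y : ℝ => ((s u * s (u - y) : ℝ):ℂ)) :=
          ((hsi.comp_sub_left u).const_mul (s u)).ofReal
        refine hbase.bdd_mul (Continuous.aestronglyMeasurable (by fun_prop)) (c := 1) (Eventually.of_forall fun y => ?_)
        rw [phase_norm]
    · refine Integrable.mono' (hsi.mul_const (∫ v, s v))
        ((hΘmeas.norm.prod_swap).integral_prod_right') (Eventually.of_forall fun u => ?_)
      rw [Real.norm_of_nonneg (integral_nonneg fun y => norm_nonneg _)]
      have hle : (∫ y, ‖cexp (-cI * (ξ:ℂ) * ((u - y/2 : ℝ):ℂ)) * ((s u * s (u - y) : ℝ):ℂ)‖)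
          = ∫ y, s u * s (u - y) :=
        integral_congr_ae (Eventually.of_forall fun y => hΘnorm y u)
      rw [hle, integral_const_mul, integral_sub_left_eq_self (fun t => s t) volume u]
  have hGint : Integrable G := by
    have := hΘ.integral_prod_left
    exact this.congr (Eventually.of_forall fun y => rfl)
  -- Continuity of G at 0
  have hGcont : ContinuousAt G 0 := by
    set H : ℝ → ℂ := fun y =>
      ∫ u : ℝ, cexp (-cI * (ξ:ℂ) * (u:ℂ)) * ((s u * s (u - y) : ℝ):ℂ) with hHdef
    have hHint : ∀ y : ℝ, Integrable (fun u : ℝ =>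
        cexp (-cI * (ξ:ℂ) * (u:ℂ)) * ((s u * s (u - y) : ℝ):ℂ)) := by
      intro y
      refine (hprod_int y).ofReal.bdd_mul
        (Continuous.aestronglyMeasurable (by fun_prop)) (c := 1) (Eventually.of_forall fun u => ?_)
      rw [phase_norm]
    have hGH : ∀ y : ℝ, G y = cexp (cI * (ξ:ℂ) * ((y/2 : ℝ):ℂ)) * H y := by
      intro y
      rw [hGdef, hHdef]
      simp only
      rw [← integral_const_mul]
      refine integral_congr_ae (Eventually.of_forall fun u => ?_)
      show cexp (-cI * (ξ:ℂ) * ((u - y/2 : ℝ):ℂ)) * ((s u * s (u - y) : ℝ):ℂ)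
        = cexp (cI * (ξ:ℂ) * ((y/2 : ℝ):ℂ)) * (cexp (-cI * (ξ:ℂ) * (u:ℂ)) * ((s u * s (u - y) : ℝ):ℂ))
      rw [← mul_assoc, ← Complex.exp_add]
      congr 2
      push_cast; ring
    have hHcont : ContinuousAt H 0 := by
      rw [ContinuousAt, tendsto_iff_norm_sub_tendsto_zero]
      have hbound : ∀ y : ℝ, ‖H y - H 0‖ ≤ Real.sqrt (∫ x, s x ^ 2) *
          (eLpNorm (fun u => s (u - y) - s u) 2 volume).toReal := by
        intro y
        have hmem : MemLp (fun u : ℝ => s (u - y) - s u) 2 (volume : Measure ℝ) :=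
          (memℒp_translate hs2 y).sub hs2
        have hsub : H y - H 0 = ∫ u : ℝ, cexp (-cI * (ξ:ℂ) * (u:ℂ))
            * ((s u * s (u - y) - s u * s (u - 0) : ℝ):ℂ) := by
          rw [hHdef]
          simp only
          rw [← integral_sub (hHint y) (hHint 0)]
          refine integral_congr_ae (Eventually.of_forall fun u => ?_)
          push_cast
          ring
        rw [hsub]
        have step1 : ‖∫ u : ℝ, cexp (-cI * (ξ:ℂ) * (u:ℂ))
            * ((s u * s (u - y) - s u * s (u - 0) : ℝ):ℂ)‖
            ≤ ∫ u, s u * |s (u - y) - s u| := by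
          refine (norm_integral_le_integral_norm _).trans (le_of_eq ?_)
          refine integral_congr_ae (Eventually.of_forall fun u => ?_)
          simp only [norm_mul, phase_norm, one_mul, Complex.norm_real, Real.norm_eq_abs]
          rw [show s u * s (u - y) - s u * s (u - 0) = s u * (s (u - y) - s u) from by
            rw [sub_zero]; ring, abs_mul, abs_of_nonneg (hs0 u)]
        refine step1.trans ?_
        have hd2 : Integrable (fun u : ℝ => (s (u - y) - s u)^2) := hmem.integrable_sq
        have habs2 : Integrable (fun u : ℝ => |s (u - y) - s u| ^ 2) :=
          hd2.congr (Eventually.of_forall fun u => by simp [sq_abs])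
        have hdm : AEStronglyMeasurable (fun u : ℝ => |s (u - y) - s u|) volume := by
          have := hmem.aestronglyMeasurable.norm
          simpa [Real.norm_eq_abs] using this
        have hcs := cs_le hs0 (fun u => abs_nonneg _) hsm hdm hs2.integrable_sq habs2
        refine hcs.trans (le_of_eq ?_)
        congr 1
        rw [show (∫ u, |s (u - y) - s u| ^ 2) = ∫ u, (s (u - y) - s u)^2 from
          integral_congr_ae (Eventually.of_forall fun u => by simp [sq_abs])]
        exact sqrt_integral_sq_eq hmem
      have htt := tendsto_translate hs2
      have htoReal : Tendsto (fun y : ℝ =>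
          (eLpNorm (fun u => s (u - y) - s u) 2 volume).toReal) (𝓝 0) (𝓝 0) := by
        have := (ENNReal.tendsto_toReal (a := 0) (by simp)).comp htt
        exact this
      have hlim := htoReal.const_mul (Real.sqrt (∫ x, s x ^ 2))
      rw [mul_zero] at hlim
      exact squeeze_zero (fun y => norm_nonneg _) hbound hlim
    have hGeq : G = fun y => cexp (cI * (ξ:ℂ) * ((y/2 : ℝ):ℂ)) * H y := funext hGH
    rw [hGeq]
    exact ContinuousAt.mul (Continuous.continuousAt (by fun_prop)) hHcont
  -- main tendsto
  have hmain := Real.tendsto_integral_gaussian_smul' (f := G) hGint (v := 0) hGcont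
  have habs : Tendsto (fun c : ℝ =>
      ‖∫ w : ℝ, ((π * c : ℂ) ^ (Module.finrank ℝ ℝ / 2 : ℂ)
        * cexp (-(π:ℂ)^2 * (c:ℂ) * (‖(0:ℝ) - w‖:ℂ)^2)) • G w‖) atTop (𝓝 ‖G 0‖) :=
    hmain.norm
  rw [← hG0]
  refine le_of_tendsto habs ?_
  filter_upwards [eventually_gt_atTop (0:ℝ)] with c hc
  have hbpos : (0:ℝ) < 1/(4*π^2*c) := by positivity
  have hkid := key_identity hs0 hsi ξ hbpos
  -- kernel identity
  have hker : ∀ y : ℝ, ((π * c : ℂ) ^ (Module.finrank ℝ ℝ / 2 : ℂ)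
        * cexp (-(π:ℂ)^2 * (c:ℂ) * (‖(0:ℝ) - y‖:ℂ)^2)) • G y
      = ((1/(2*π) : ℝ):ℂ) * (((Real.sqrt (π/(1/(4*π^2*c))) * rexp (-y^2/(4*(1/(4*π^2*c))))) : ℝ):ℂ)
        * G y := by
    intro y
    rw [smul_eq_mul]
    congr 1
    have e1 : ((π * c : ℂ) ^ (Module.finrank ℝ ℝ / 2 : ℂ)) = ((Real.sqrt (π*c) : ℝ) : ℂ) := by
      rw [Module.finrank_self, Real.sqrt_eq_rpow,
        Complex.ofReal_cpow (by positivity) ((1:ℝ)/2), Complex.ofReal_mul]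
      congr 1
      norm_num
    have e2 : cexp (-(π:ℂ)^2 * (c:ℂ) * (‖(0:ℝ) - y‖:ℂ)^2) = ((rexp (-π^2*c*y^2) : ℝ):ℂ) := by
      rw [show -(π:ℂ)^2 * (c:ℂ) * (‖(0:ℝ) - y‖:ℂ)^2 = ((-π^2*c*y^2 : ℝ):ℂ) from by
        rw [Real.norm_eq_abs, zero_sub, abs_neg,
          show ((|y|:ℝ):ℂ)^2 = ((y^2:ℝ):ℂ) from by rw [← Complex.ofReal_pow, sq_abs]]
        push_cast; ring]
      rw [Complex.ofReal_exp]
    rw [e1, e2]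
    have e3 : (1/(2*π) : ℝ) * (Real.sqrt (π/(1/(4*π^2*c))) * rexp (-y^2/(4*(1/(4*π^2*c)))))
        = Real.sqrt (π*c) * rexp (-π^2*c*y^2) := by
      have h4 : π/(1/(4*π^2*c)) = (2*π)^2 * (π*c) := by field_simp; ring
      have h5 : Real.sqrt (π/(1/(4*π^2*c))) = (2*π) * Real.sqrt (π*c) := by
        rw [h4, Real.sqrt_mul (by positivity), Real.sqrt_sq (by positivity)]
      have h6 : -y^2/(4*(1/(4*π^2*c))) = -π^2*c*y^2 := by field_simp
      rw [h5, h6]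
      field_simp
    rw [← Complex.ofReal_mul, ← Complex.ofReal_mul]
    exact congrArg Complex.ofReal e3.symm
  calc ‖∫ w : ℝ, ((π * c : ℂ) ^ (Module.finrank ℝ ℝ / 2 : ℂ)
        * cexp (-(π:ℂ)^2 * (c:ℂ) * (‖(0:ℝ) - w‖:ℂ)^2)) • G w‖
      = ‖((1/(2*π) : ℝ):ℂ) * ∫ y : ℝ,
          (((Real.sqrt (π/(1/(4*π^2*c))) * rexp (-y^2/(4*(1/(4*π^2*c))))) : ℝ):ℂ) * G y‖ := by
        rw [← integral_const_mul]
        congr 1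
        refine integral_congr_ae (Eventually.of_forall fun y => ?_)
        simpa [mul_assoc] using hker y
    _ = (1/(2*π)) * ‖∫ τ : ℝ, ((rexp (-(1/(4*π^2*c)) * τ^2) : ℝ) : ℂ)
          * (ft s (ξ/2 + τ) * ft s (ξ/2 - τ))‖ := by
        rw [hkid, norm_mul, Complex.norm_real, Real.norm_of_nonneg (by positivity)]
    _ ≤ (1/(2*π)) * ∫ τ, ‖ft s (ξ/2 + τ)‖ * ‖ft s (ξ/2 - τ)‖ := by
        refine mul_le_mul_of_nonneg_left ?_ (by positivity)
        refine (norm_integral_le_integral_norm _).trans ?_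
        have hQint : Integrable (fun τ : ℝ =>
            ‖ft s (ξ/2 + τ)‖ * ‖ft s (ξ/2 - τ)‖) := by
          refine cs_integrable (fun τ => norm_nonneg _) (fun τ => norm_nonneg _)
            (continuous_norm.comp (hSc.comp (by fun_prop))).aestronglyMeasurable
            (continuous_norm.comp (hSc.comp (by fun_prop))).aestronglyMeasurable ?_ ?_
          · exact hS2.comp_add_left (ξ/2)
          · exact hS2.comp_sub_left (ξ/2)
        refine integral_mono_of_nonneg (Eventually.of_forall fun τ => norm_nonneg _)
          hQint (Eventually.of_forall fun τ => ?_)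
        show ‖((rexp (-(1/(4*π^2*c)) * τ^2) : ℝ) : ℂ) * (ft s (ξ/2 + τ) * ft s (ξ/2 - τ))‖
          ≤ ‖ft s (ξ/2 + τ)‖ * ‖ft s (ξ/2 - τ)‖
        rw [norm_mul, Complex.norm_real, Real.norm_of_nonneg (Real.exp_pos _).le, norm_mul]
        have h1 : rexp (-(1/(4*π^2*c)) * τ^2) ≤ 1 := by
          rw [Real.exp_le_one_iff, neg_mul]
          exact neg_nonpos.2 (by positivity)
        have h2 : (0:ℝ) ≤ ‖ft s (ξ/2 + τ)‖ * ‖ft s (ξ/2 - τ)‖ :=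
          mul_nonneg (norm_nonneg _) (norm_nonneg _)
        nlinarith [Real.exp_pos (-(1/(4*π^2*c)) * τ^2)]

theorem stmt10 (g₀ : ℝ → ℝ) (hg₀ : IsNormalized g₀)
    (hs2 : MemLp (fun v => Real.sqrt (g₀ v)) 2 (volume : Measure ℝ))
    (ν : ℝ) (hν : 0 < ν)
    (hsqrt : Integrable (fun ξ : ℝ =>
      |ξ| ^ (2 * ν) * ‖ft (fun v => Real.sqrt (g₀ v)) ξ‖ ^ 2)) :
    (∃ M : ℝ, ∀ ξ : ℝ, |ξ| ^ ν * ‖ft g₀ ξ‖ ≤ M) ∧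
    ∃ C > (0 : ℝ), ∃ β > (0 : ℝ), ∀ ξ : ℝ,
      ‖ft g₀ ξ‖ ≤ C * (1 + β * |ξ|) ^ (-ν) := by
  obtain ⟨⟨hg0nn, hg0int, hmass⟩, hmean, hvar⟩ := hg₀
  set s : ℝ → ℝ := fun v => Real.sqrt (g₀ v) with hsdef
  have hs0 : ∀ x, 0 ≤ s x := fun x => Real.sqrt_nonneg _
  have hss : ∀ v, s v * s v = g₀ v := fun v => Real.mul_self_sqrt (hg0nn v)
  have hg0s : g₀ = fun x => s x * s x := funext fun v => (hss v).symm
  -- second moment integrable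
  have hv2int : Integrable (fun v : ℝ => v ^ 2 * g₀ v) := by
    by_contra h
    rw [integral_undef h] at hvar
    norm_num at hvar
  -- s is integrable
  have hsi : Integrable s := by
    have hbint : Integrable (fun v : ℝ => (g₀ v + v ^ 2 * g₀ v + (1 + v ^ 2)⁻¹) * (1/2)) :=
      ((hg0int.add hv2int).add integrable_inv_one_add_sq).mul_const _
    refine hbint.mono' (Real.continuous_sqrt.comp_aestronglyMeasurable
      hg0int.aestronglyMeasurable) (Eventually.of_forall fun v => ?_)
    have hv1 : (0:ℝ) < 1 + v ^ 2 := by positivity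
    have h2 := two_mul_le_add_sq (Real.sqrt (g₀ v * (1 + v ^ 2))) (Real.sqrt ((1 + v ^ 2)⁻¹))
    rw [Real.sq_sqrt (mul_nonneg (hg0nn v) hv1.le), Real.sq_sqrt (by positivity)] at h2
    have hprod : Real.sqrt (g₀ v * (1 + v ^ 2)) * Real.sqrt ((1 + v ^ 2)⁻¹) = s v := by
      rw [← Real.sqrt_mul (mul_nonneg (hg0nn v) hv1.le)]
      congr 1
      field_simp
    rw [Real.norm_of_nonneg (hs0 v), ← hprod]
    nlinarith [Real.sqrt_nonneg (g₀ v * (1 + v ^ 2)), Real.sqrt_nonneg ((1 + v ^ 2)⁻¹)]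
  have hSc : Continuous (ft s) := ft_cont hsi
  -- |ft s|² is integrable
  have hS2 : Integrable (fun τ : ℝ => ‖ft s τ‖ ^ 2) := by
    set K : ℝ := ∫ v, s v with hKdef
    have hKτ : ∀ τ, ‖ft s τ‖ ≤ K := fun τ => ft_norm_le hs0 τ
    have hbint : Integrable (fun τ : ℝ =>
        (Set.Icc (-1:ℝ) 1).indicator (fun _ => K ^ 2) τ
          + |τ| ^ (2 * ν) * ‖ft s τ‖ ^ 2) := by
      refine Integrable.add ?_ hsqrt
      rw [integrable_indicator_iff measurableSet_Icc]
      exact integrableOn_const measure_Icc_lt_top.ne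
    refine hbint.mono' (Continuous.aestronglyMeasurable ?_)
      (Eventually.of_forall fun τ => ?_)
    · exact ((continuous_norm.comp hSc).pow 2)
    · rw [Real.norm_of_nonneg (by positivity)]
      by_cases hmem : τ ∈ Set.Icc (-1:ℝ) 1
      · rw [Set.indicator_of_mem hmem]
        have h1 : ‖ft s τ‖ ^ 2 ≤ K ^ 2 :=
          pow_le_pow_left₀ (norm_nonneg _) (hKτ τ) 2
        have h2 : (0:ℝ) ≤ |τ| ^ (2 * ν) * ‖ft s τ‖ ^ 2 := by positivity
        linarith
      · rw [Set.indicator_of_notMem hmem]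
        have h1 : 1 ≤ |τ| := by
          by_contra h
          push_neg at h
          exact hmem (Set.mem_Icc.2 (abs_le.1 h.le))
        have h2 : (1:ℝ) ≤ |τ| ^ (2 * ν) := by
          calc (1:ℝ) = 1 ^ (2 * ν) := (Real.one_rpow _).symm
            _ ≤ |τ| ^ (2 * ν) := Real.rpow_le_rpow zero_le_one h1 (by positivity)
        nlinarith [sq_nonneg (‖ft s τ‖)]
  -- weighted L² quantities
  have hF1sq : ∀ τ : ℝ, (|τ| ^ ν * ‖ft s τ‖) ^ 2
      = |τ| ^ (2 * ν) * ‖ft s τ‖ ^ 2 := by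
    intro τ
    rw [mul_pow]
    congr 1
    rw [← Real.rpow_natCast (|τ| ^ ν) 2, ← Real.rpow_mul (abs_nonneg τ)]
    norm_num [mul_comm]
  have hA2 : Integrable (fun τ : ℝ => (|τ| ^ ν * ‖ft s τ‖) ^ 2) :=
    hsqrt.congr (Eventually.of_forall fun τ => (hF1sq τ).symm)
  set M0 : ℝ := Real.sqrt (∫ τ, (|τ| ^ ν * ‖ft s τ‖) ^ 2)
      * Real.sqrt (∫ τ, ‖ft s τ‖ ^ 2) with hM0def
  have hM0nn : 0 ≤ M0 := mul_nonneg (Real.sqrt_nonneg _) (Real.sqrt_nonneg _)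
  set M : ℝ := (1 / (2 * π)) * (2 ^ ν * (2 * M0)) with hMdef
  have hMnn : 0 ≤ M := by
    have : (0:ℝ) < π := pi_pos
    positivity
  -- continuity of weight functions
  have hF1c : Continuous (fun τ : ℝ => |τ| ^ ν * ‖ft s τ‖) := by
    refine Continuous.mul ?_ (continuous_norm.comp hSc)
    exact continuous_abs.rpow_const (fun x => Or.inr hν.le)
  have hF2c : Continuous (fun τ : ℝ => ‖ft s τ‖) :=
    continuous_norm.comp hSc
  -- main bound for every ξ
  have hM : ∀ ξ : ℝ, |ξ| ^ ν * ‖ft g₀ ξ‖ ≤ M := by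
    intro ξ
    have hkey : ‖ft g₀ ξ‖ ≤
        (1 / (2 * π)) * ∫ τ, ‖ft s (ξ/2 + τ)‖ * ‖ft s (ξ/2 - τ)‖ := by
      rw [hg0s]
      exact key_bound hs0 hsi hs2 hS2 ξ
    -- integrability of the various products
    have hc1 : Continuous (fun τ : ℝ => |ξ/2 + τ| ^ ν * ‖ft s (ξ/2 + τ)‖) :=
      hF1c.comp (by fun_prop)
    have hc2 : Continuous (fun τ : ℝ => |ξ/2 - τ| ^ ν * ‖ft s (ξ/2 - τ)‖) :=
      hF1c.comp (by fun_prop)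
    have hc3 : Continuous (fun τ : ℝ => ‖ft s (ξ/2 + τ)‖) :=
      hF2c.comp (by fun_prop)
    have hc4 : Continuous (fun τ : ℝ => ‖ft s (ξ/2 - τ)‖) :=
      hF2c.comp (by fun_prop)
    have hi1 : Integrable (fun τ : ℝ => (|ξ/2 + τ| ^ ν * ‖ft s (ξ/2 + τ)‖) ^ 2) :=
      hA2.comp_add_left (ξ/2)
    have hi2 : Integrable (fun τ : ℝ => (|ξ/2 - τ| ^ ν * ‖ft s (ξ/2 - τ)‖) ^ 2) :=
      hA2.comp_sub_left (ξ/2)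
    have hi3 : Integrable (fun τ : ℝ => ‖ft s (ξ/2 + τ)‖ ^ 2) :=
      hS2.comp_add_left (ξ/2)
    have hi4 : Integrable (fun τ : ℝ => ‖ft s (ξ/2 - τ)‖ ^ 2) :=
      hS2.comp_sub_left (ξ/2)
    have hQint : Integrable (fun τ : ℝ =>
        ‖ft s (ξ/2 + τ)‖ * ‖ft s (ξ/2 - τ)‖) :=
      cs_integrable (fun τ => norm_nonneg _) (fun τ => norm_nonneg _)
        hc3.aestronglyMeasurable hc4.aestronglyMeasurable hi3 hi4
    have hT1int : Integrable (fun τ : ℝ =>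
        (|ξ/2 + τ| ^ ν * ‖ft s (ξ/2 + τ)‖) * ‖ft s (ξ/2 - τ)‖) :=
      cs_integrable (fun τ => by positivity) (fun τ => norm_nonneg _)
        hc1.aestronglyMeasurable hc4.aestronglyMeasurable hi1 hi4
    have hT2int : Integrable (fun τ : ℝ =>
        ‖ft s (ξ/2 + τ)‖ * (|ξ/2 - τ| ^ ν * ‖ft s (ξ/2 - τ)‖)) :=
      cs_integrable (fun τ => norm_nonneg _) (fun τ => by positivity)
        hc3.aestronglyMeasurable hc2.aestronglyMeasurable hi3 hi2
    -- Cauchy–Schwarz for both terms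
    have hT1 : (∫ τ, (|ξ/2 + τ| ^ ν * ‖ft s (ξ/2 + τ)‖)
        * ‖ft s (ξ/2 - τ)‖) ≤ M0 := by
      refine (cs_le (fun τ => by positivity) (fun τ => norm_nonneg _)
        hc1.aestronglyMeasurable hc4.aestronglyMeasurable hi1 hi4).trans (le_of_eq ?_)
      rw [hM0def]
      congr 2
      · exact integral_add_left_eq_self (fun t => (|t| ^ ν * ‖ft s t‖) ^ 2) (ξ/2)
      · exact integral_sub_left_eq_self (fun t => ‖ft s t‖ ^ 2) volume (ξ/2)
    have hT2 : (∫ τ, ‖ft s (ξ/2 + τ)‖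
        * (|ξ/2 - τ| ^ ν * ‖ft s (ξ/2 - τ)‖)) ≤ M0 := by
      refine (cs_le (fun τ => norm_nonneg _) (fun τ => by positivity)
        hc3.aestronglyMeasurable hc2.aestronglyMeasurable hi3 hi2).trans (le_of_eq ?_)
      rw [hM0def, mul_comm]
      congr 2
      · exact integral_sub_left_eq_self (fun t => (|t| ^ ν * ‖ft s t‖) ^ 2)
          volume (ξ/2)
      · exact integral_add_left_eq_self (fun t => ‖ft s t‖ ^ 2) (ξ/2)
    -- pointwise weight inequality integrated
    have hWint : (|ξ| ^ ν) * (∫ τ, ‖ft s (ξ/2 + τ)‖ * ‖ft s (ξ/2 - τ)‖)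
        ≤ 2 ^ ν * (2 * M0) := by
      rw [← integral_const_mul]
      have hmono : (∫ τ, |ξ| ^ ν * (‖ft s (ξ/2 + τ)‖ * ‖ft s (ξ/2 - τ)‖))
          ≤ ∫ τ, 2 ^ ν * ((|ξ/2 + τ| ^ ν * ‖ft s (ξ/2 + τ)‖)
              * ‖ft s (ξ/2 - τ)‖
            + ‖ft s (ξ/2 + τ)‖ * (|ξ/2 - τ| ^ ν * ‖ft s (ξ/2 - τ)‖)) := by
        refine integral_mono_of_nonneg (Eventually.of_forall fun τ => by positivity)
          (((hT1int.add hT2int).const_mul _)) (Eventually.of_forall fun τ => ?_)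
        have hw := weight_ineq hν.le (ξ/2 + τ) (ξ/2 - τ)
        rw [show ξ/2 + τ + (ξ/2 - τ) = ξ from by ring] at hw
        have h2nn : (0:ℝ) ≤ ‖ft s (ξ/2 + τ)‖ * ‖ft s (ξ/2 - τ)‖ :=
          mul_nonneg (norm_nonneg _) (norm_nonneg _)
        refine le_trans (mul_le_mul_of_nonneg_right hw h2nn) (le_of_eq (by ring))
      refine hmono.trans ?_
      rw [integral_const_mul, integral_add hT1int hT2int]
      have := add_le_add hT1 hT2
      have h2ν : (0:ℝ) ≤ (2:ℝ) ^ ν := (Real.rpow_pos_of_pos two_pos ν).le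
      nlinarith
    -- combine
    calc |ξ| ^ ν * ‖ft g₀ ξ‖
        ≤ |ξ| ^ ν * ((1 / (2 * π)) * ∫ τ, ‖ft s (ξ/2 + τ)‖
            * ‖ft s (ξ/2 - τ)‖) :=
          mul_le_mul_of_nonneg_left hkey (Real.rpow_nonneg (abs_nonneg ξ) ν)
      _ = (1 / (2 * π)) * ((|ξ| ^ ν) * ∫ τ, ‖ft s (ξ/2 + τ)‖
            * ‖ft s (ξ/2 - τ)‖) := by ring
      _ ≤ (1 / (2 * π)) * (2 ^ ν * (2 * M0)) := by
          refine mul_le_mul_of_nonneg_left hWint ?_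
          have : (0:ℝ) < π := pi_pos
          positivity
      _ = M := hMdef.symm
  refine ⟨⟨M, hM⟩, 2 ^ ν * (M + 1), by positivity, 1, one_pos, fun ξ => ?_⟩
  have habs1 : ‖ft g₀ ξ‖ ≤ 1 := by
    have := ft_norm_le hg0nn ξ
    rwa [hmass] at this
  have hX : (0:ℝ) < 1 + 1 * |ξ| := by positivity
  rw [Real.rpow_neg hX.le, ← div_eq_mul_inv, le_div_iff₀ (Real.rpow_pos_of_pos hX ν)]
  have h2ν : (0:ℝ) < (2:ℝ) ^ ν := Real.rpow_pos_of_pos two_pos ν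
  rcases le_total |ξ| 1 with hle | hle
  · have hXle : (1 + 1 * |ξ|) ^ ν ≤ 2 ^ ν :=
      Real.rpow_le_rpow (by positivity) (by linarith) hν.le
    calc ‖ft g₀ ξ‖ * (1 + 1 * |ξ|) ^ ν ≤ 1 * 2 ^ ν :=
          mul_le_mul habs1 hXle (Real.rpow_nonneg (by positivity) ν) zero_le_one
      _ ≤ 2 ^ ν * (M + 1) := by nlinarith
  · have hXle : (1 + 1 * |ξ|) ^ ν ≤ 2 ^ ν * |ξ| ^ ν := by
      rw [← Real.mul_rpow (by norm_num) (abs_nonneg ξ)]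
      exact Real.rpow_le_rpow (by positivity) (by linarith) hν.le
    calc ‖ft g₀ ξ‖ * (1 + 1 * |ξ|) ^ ν
        ≤ ‖ft g₀ ξ‖ * (2 ^ ν * |ξ| ^ ν) :=
          mul_le_mul_of_nonneg_left hXle (norm_nonneg _)
      _ = 2 ^ ν * (|ξ| ^ ν * ‖ft g₀ ξ‖) := by ring
      _ ≤ 2 ^ ν * M := mul_le_mul_of_nonneg_left (hM ξ) h2ν.le
      _ ≤ 2 ^ ν * (M + 1) := by nlinarith
end

section
/- Let p, q > 0 with p + q = 1 and define Ĝ : ℝ → ℝ by Ĝ(ξ) = (1 + |ξ|) e^{−|ξ|}. Then for every ξ ∈ ℝ, Ĝ(pξ)Ĝ(qξ) − Ĝ(ξ) = pq ξ² e^{−|ξ|}; moreover Ĝ is differentiable with Ĝ′(ξ) = −ξ e^{−|ξ|}, so Ĝ satisfies the stationary scaled equation Ĝ(pξ)Ĝ(qξ) − Ĝ(ξ) = −pq ξ Ĝ′(ξ) for all ξ ∈ ℝ. -/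
open MeasureTheory Real

/-- `Ĝ(ξ) = (1 + |ξ|) e^{−|ξ|}`. -/
noncomputable def Ghat (ξ : ℝ) : ℝ := (1 + |ξ|) * Real.exp (-|ξ|)


lemma Ghat_deriv (ξ : ℝ) : HasDerivAt Ghat (-ξ * Real.exp (-|ξ|)) ξ := by
  rcases lt_trichotomy ξ 0 with h | h | h
  · have hd : HasDerivAt (fun x : ℝ => (1 - x) * Real.exp x) (-ξ * Real.exp ξ) ξ := by
      have := ((hasDerivAt_id ξ).const_sub 1).mul (Real.hasDerivAt_exp ξ)
      refine this.congr_deriv ?_; simp [id_eq]; ring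
    have heq : (fun x : ℝ => (1 - x) * Real.exp x) =ᶠ[nhds ξ] Ghat := by
      filter_upwards [Iio_mem_nhds h] with x hx
      have hx' : x < 0 := hx
      simp [Ghat, abs_of_neg hx']; ring
    have := hd.congr_of_eventuallyEq heq.symm
    simpa [abs_of_neg h] using this
  · subst h
    rw [hasDerivAt_iff_isLittleO, Asymptotics.isLittleO_iff]
    intro c hc
    filter_upwards [Metric.ball_mem_nhds (0:ℝ) hc] with x hx
    have hb : |Ghat x - 1| ≤ x ^ 2 := by
      have h1 : 1 + |x| ≤ Real.exp |x| := by
        have := Real.add_one_le_exp (|x|); linarith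
      have h2 : 1 - |x| ≤ Real.exp (-|x|) := by
        have := Real.add_one_le_exp (-|x|); linarith
      have hpos := Real.exp_pos (|x|)
      have hup : Ghat x ≤ 1 := by
        rw [Ghat, Real.exp_neg, ← div_eq_mul_inv, div_le_one hpos]
        exact h1
      have hlow : 1 - x ^ 2 ≤ Ghat x := by
        have h3 : (1 + |x|) * (1 - |x|) ≤ (1 + |x|) * Real.exp (-|x|) :=
          mul_le_mul_of_nonneg_left h2 (by positivity)
        have h4 : (1 + |x|) * (1 - |x|) = 1 - x ^ 2 := by
          have := sq_abs x; nlinarith [sq_abs x]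
        rw [Ghat]; linarith
      rw [abs_le]; constructor <;> [linarith; nlinarith [sq_nonneg x]]
    have hx' : |x| < c := by simpa [Real.dist_eq] using hx
    have hxc : x ^ 2 ≤ c * |x| := by nlinarith [abs_nonneg x, sq_abs x]
    have hG0 : Ghat 0 = 1 := by simp [Ghat]
    calc ‖Ghat x - Ghat 0 - (x - 0) • (-(0:ℝ) * Real.exp (-|0|))‖
        = |Ghat x - 1| := by rw [hG0]; simp
      _ ≤ x ^ 2 := hb
      _ ≤ c * |x| := hxc
      _ = c * ‖x - 0‖ := by rw [sub_zero, Real.norm_eq_abs]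
  · have hd : HasDerivAt (fun x : ℝ => (1 + x) * Real.exp (-x)) (-ξ * Real.exp (-ξ)) ξ := by
      have := ((hasDerivAt_id ξ).const_add 1).mul ((hasDerivAt_id ξ).neg.exp)
      refine this.congr_deriv ?_; simp [id_eq]; ring
    have heq : (fun x : ℝ => (1 + x) * Real.exp (-x)) =ᶠ[nhds ξ] Ghat := by
      filter_upwards [Ioi_mem_nhds h] with x hx
      have hx' : (0:ℝ) < x := hx
      simp [Ghat, abs_of_pos hx']
    have := hd.congr_of_eventuallyEq heq.symm
    simpa [abs_of_pos h] using this

lemma Ghat_key (p q : ℝ) (hp : 0 < p) (hq : 0 < q) (hpq : p + q = 1) (ξ : ℝ) :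
    Ghat (p * ξ) * Ghat (q * ξ) - Ghat ξ = p * q * ξ ^ 2 * Real.exp (-|ξ|) := by
  have hap : |p * ξ| = p * |ξ| := by rw [abs_mul, abs_of_pos hp]
  have haq : |q * ξ| = q * |ξ| := by rw [abs_mul, abs_of_pos hq]
  have hexp : Real.exp (-(p * |ξ|)) * Real.exp (-(q * |ξ|)) = Real.exp (-|ξ|) := by
    rw [← Real.exp_add]; congr 1; linear_combination -|ξ| * hpq
  have key : (1 + p * |ξ|) * (1 + q * |ξ|) = 1 + |ξ| + p * q * ξ ^ 2 := by
    linear_combination |ξ| * hpq + p * q * (sq_abs ξ)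
  simp only [Ghat, hap, haq]
  linear_combination ((1 + p * |ξ|) * (1 + q * |ξ|)) * hexp + Real.exp (-|ξ|) * key

theorem stmt15 (p q : ℝ) (hp : 0 < p) (hq : 0 < q) (hpq : p + q = 1) :
    (∀ ξ : ℝ, Ghat (p * ξ) * Ghat (q * ξ) - Ghat ξ = p * q * ξ ^ 2 * Real.exp (-|ξ|)) ∧
    (∀ ξ : ℝ, HasDerivAt Ghat (-ξ * Real.exp (-|ξ|)) ξ) ∧
    (∀ ξ : ℝ, Ghat (p * ξ) * Ghat (q * ξ) - Ghat ξ = -(p * q * ξ) * deriv Ghat ξ) := by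
  refine ⟨Ghat_key p q hp hq hpq, Ghat_deriv, ?_⟩
  intro ξ
  rw [(Ghat_deriv ξ).deriv, Ghat_key p q hp hq hpq ξ]
  ring
end

section
/- Let 0 < q ≤ p, η ≥ 0, and let u : ℝ → ℂ be measurable with |u(ξ)| ≤ 1 for all ξ ∈ ℝ. Then ∫_ℝ |ξ|^{2η} |u(pξ)|² |u(qξ)|² dξ ≤ (1/2)(q^{−(2η+1)} + p^{−(2η+1)}) ∫_ℝ |ξ|^{2η} |u(ξ)|² dξ. -/
open MeasureTheory Real

lemma scale_lemma (c η : ℝ) (hc : 0 < c) (u : ℝ → ℂ) (humeas : Measurable u) :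
    (∫⁻ ξ : ℝ, ENNReal.ofReal (|ξ| ^ (2 * η) * ‖u (c * ξ)‖ ^ 2)) =
    ENNReal.ofReal (c ^ (-(2 * η + 1))) *
      ∫⁻ ξ : ℝ, ENNReal.ofReal (|ξ| ^ (2 * η) * ‖u ξ‖ ^ 2) := by
  set G : ℝ → ENNReal := fun x => ENNReal.ofReal (|x| ^ (2 * η) * ‖u x‖ ^ 2) with hG
  have hGmeas : Measurable G := by
    apply Measurable.ennreal_ofReal
    exact (by measurability : Measurable fun x : ℝ => |x| ^ (2 * η)).mul
      ((humeas.norm).pow_const 2)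
  have key : ∀ ξ : ℝ, ENNReal.ofReal (|ξ| ^ (2 * η) * ‖u (c * ξ)‖ ^ 2)
      = ENNReal.ofReal (c ^ (-(2 * η))) * G (c * ξ) := by
    intro ξ
    have habs : |c * ξ| ^ (2 * η) = c ^ (2 * η) * |ξ| ^ (2 * η) := by
      rw [abs_mul, abs_of_pos hc, Real.mul_rpow hc.le (abs_nonneg ξ)]
    have hcpos : (0:ℝ) < c ^ (2 * η) := Real.rpow_pos_of_pos hc _
    have h1 : |ξ| ^ (2 * η) = c ^ (-(2 * η)) * |c * ξ| ^ (2 * η) := by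
      rw [habs, Real.rpow_neg hc.le]
      field_simp
    rw [hG]
    simp only
    rw [h1, mul_assoc, ENNReal.ofReal_mul (by positivity)]
  simp only [key]
  rw [lintegral_const_mul' _ _ ENNReal.ofReal_ne_top]
  have hmap : (∫⁻ ξ : ℝ, G (c * ξ)) = ENNReal.ofReal c⁻¹ * ∫⁻ x, G x := by
    calc (∫⁻ ξ : ℝ, G (c * ξ)) = ∫⁻ x, G x ∂(Measure.map (c * ·) volume) := by
          rw [lintegral_map hGmeas (measurable_const_mul c)]
      _ = ENNReal.ofReal c⁻¹ * ∫⁻ x, G x := by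
          rw [Real.map_volume_mul_left hc.ne', abs_of_pos (inv_pos.2 hc),
            lintegral_smul_measure, smul_eq_mul]
  rw [hmap, ← mul_assoc, ← ENNReal.ofReal_mul (by positivity)]
  congr 2
  rw [Real.rpow_neg hc.le, Real.rpow_neg hc.le, Real.rpow_add hc, Real.rpow_one, mul_inv]


theorem stmt18 (p q : ℝ) (hq : 0 < q) (hqp : q ≤ p) (η : ℝ) (hη : 0 ≤ η)
    (u : ℝ → ℂ) (humeas : Measurable u) (hu : ∀ ξ, ‖u ξ‖ ≤ 1) :
    (∫⁻ ξ : ℝ, ENNReal.ofReal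
        (|ξ| ^ (2 * η) * ‖u (p * ξ)‖ ^ 2 * ‖u (q * ξ)‖ ^ 2)) ≤
      ENNReal.ofReal ((1 / 2) * (q ^ (-(2 * η + 1)) + p ^ (-(2 * η + 1)))) *
        ∫⁻ ξ : ℝ, ENNReal.ofReal (|ξ| ^ (2 * η) * ‖u ξ‖ ^ 2) := by
  have hp : 0 < p := lt_of_lt_of_le hq hqp
  have hpt : ∀ ξ : ℝ,
      ENNReal.ofReal (|ξ| ^ (2 * η) * ‖u (p * ξ)‖ ^ 2 * ‖u (q * ξ)‖ ^ 2)
      ≤ ENNReal.ofReal ((1/2) * (|ξ| ^ (2 * η) * ‖u (p * ξ)‖ ^ 2))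
        + ENNReal.ofReal ((1/2) * (|ξ| ^ (2 * η) * ‖u (q * ξ)‖ ^ 2)) := by
    intro ξ
    rw [← ENNReal.ofReal_add (by positivity) (by positivity)]
    apply ENNReal.ofReal_le_ofReal
    set a := ‖u (p * ξ)‖ with ha
    set b := ‖u (q * ξ)‖ with hb
    have ha0 : 0 ≤ a := norm_nonneg _
    have hb0 : 0 ≤ b := norm_nonneg _
    have ha1 : a ≤ 1 := hu _
    have hb1 : b ≤ 1 := hu _
    have hab : a ^ 2 * b ^ 2 ≤ (a ^ 2 + b ^ 2) / 2 := by
      have hb2 : b ^ 2 ≤ 1 := by nlinarith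
      have ha2 : a ^ 2 ≤ 1 := by nlinarith
      have h1 : a ^ 2 * b ^ 2 ≤ a ^ 2 := mul_le_of_le_one_right (sq_nonneg a) hb2
      have h2 : a ^ 2 * b ^ 2 ≤ b ^ 2 := by
        calc a ^ 2 * b ^ 2 = b ^ 2 * a ^ 2 := by ring
          _ ≤ b ^ 2 := mul_le_of_le_one_right (sq_nonneg b) ha2
      linarith
    have hr : (0:ℝ) ≤ |ξ| ^ (2 * η) := Real.rpow_nonneg (abs_nonneg _) _
    calc |ξ| ^ (2 * η) * a ^ 2 * b ^ 2 = |ξ| ^ (2 * η) * (a ^ 2 * b ^ 2) := by ring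
      _ ≤ |ξ| ^ (2 * η) * ((a ^ 2 + b ^ 2) / 2) := mul_le_mul_of_nonneg_left hab hr
      _ = 1/2 * (|ξ| ^ (2*η) * a ^ 2) + 1/2 * (|ξ| ^ (2*η) * b ^ 2) := by ring
  have hmeasP : Measurable fun ξ : ℝ =>
      ENNReal.ofReal ((1/2) * (|ξ| ^ (2 * η) * ‖u (p * ξ)‖ ^ 2)) := by
    apply Measurable.ennreal_ofReal
    exact measurable_const.mul ((by measurability : Measurable fun x : ℝ => |x| ^ (2 * η)).mul
      (((humeas.comp (measurable_const_mul p)).norm).pow_const 2))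
  calc (∫⁻ ξ : ℝ, ENNReal.ofReal
        (|ξ| ^ (2 * η) * ‖u (p * ξ)‖ ^ 2 * ‖u (q * ξ)‖ ^ 2))
      ≤ ∫⁻ ξ : ℝ, (ENNReal.ofReal ((1/2) * (|ξ| ^ (2 * η) * ‖u (p * ξ)‖ ^ 2))
        + ENNReal.ofReal ((1/2) * (|ξ| ^ (2 * η) * ‖u (q * ξ)‖ ^ 2))) :=
        lintegral_mono hpt
    _ = (∫⁻ ξ : ℝ, ENNReal.ofReal ((1/2) * (|ξ| ^ (2 * η) * ‖u (p * ξ)‖ ^ 2)))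
        + ∫⁻ ξ : ℝ, ENNReal.ofReal ((1/2) * (|ξ| ^ (2 * η) * ‖u (q * ξ)‖ ^ 2)) :=
        lintegral_add_left hmeasP _
    _ = ENNReal.ofReal ((1/2) * (q ^ (-(2 * η + 1)) + p ^ (-(2 * η + 1)))) *
        ∫⁻ ξ : ℝ, ENNReal.ofReal (|ξ| ^ (2 * η) * ‖u ξ‖ ^ 2) := by
        have e1 : ∀ c : ℝ, 0 < c → (∫⁻ ξ : ℝ, ENNReal.ofReal
            ((1/2) * (|ξ| ^ (2 * η) * ‖u (c * ξ)‖ ^ 2)))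
            = ENNReal.ofReal (1/2) * (ENNReal.ofReal (c ^ (-(2 * η + 1))) *
              ∫⁻ ξ : ℝ, ENNReal.ofReal (|ξ| ^ (2 * η) * ‖u ξ‖ ^ 2)) := by
          intro c hc
          rw [← scale_lemma c η hc u humeas,
            ← lintegral_const_mul' _ _ ENNReal.ofReal_ne_top]
          congr 1
          ext ξ
          rw [← ENNReal.ofReal_mul (by norm_num)]
        rw [e1 p hp, e1 q hq, ENNReal.ofReal_mul (by norm_num : (0:ℝ) ≤ 1/2),
          ENNReal.ofReal_add (by positivity) (by positivity)]
        ring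
end
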